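/- arXiv:2111.12312 — 3 statements merged into one kernel-verified Lean document; each statement's English description precedes it below -/
import Mathlib

section
/- Let X be a random variable taking values in a σ-finite measure space (X,𝒳,μ) whose distribution μ_X satisfies μ_X ≪ μ and Σ_p(X) := ‖dμ_X/dμ‖_{p/(p-1)}^{(μ)} < ∞ for some p ∈ [1,∞), let (Y,𝒴) be a measurable space, and let ρ: X×Y → [0,∞] be a measurable distortion function. Let k ∈ (0,∞) and suppose μ is ρ^{1/k}-subregular of dimension m ∈ (0,∞) with subregularity constants c ∈ (0,∞) and δ₀ ∈ (0,∞]. Then the n-th quantization error satisfies V_n(X) ≥ min{ c^{-k/m}·Σ_p(X)^{-pk/m}·n^{-pk/m}, δ₀^k }·m/(m+pk) for all n ∈ ℕ. -/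
open MeasureTheory
open scoped ENNReal Classical

/-- The `q`-norm (with respect to `μ`) of an `ℝ≥0∞`-valued function;
for `q = ∞` it is the `μ`-essential supremum. -/
noncomputable def lpNormENN {X : Type*} [MeasurableSpace X] (μ : Measure X)
    (f : X → ℝ≥0∞) (q : ℝ≥0∞) : ℝ≥0∞ :=
  if q = ∞ then essSup f μ else (∫⁻ x, (f x) ^ q.toReal ∂μ) ^ (1 / q.toReal)

/-- The conjugate exponent `p/(p-1) ∈ (1,∞]` of `p ∈ [1,∞)` (as an element of `ℝ≥0∞`),
with the convention that the conjugate exponent of `p = 1` is `∞`. -/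
noncomputable def conjExp (p : ℝ) : ℝ≥0∞ :=
  if p = 1 then ∞ else ENNReal.ofReal (p / (p - 1))

/-- The `n`-th quantization error `V_n(X) = inf_f E[ρ(X, f(X))]`, the infimum being over
all measurable maps `f : X → Y` whose range contains at most `n` points. -/
noncomputable def quantErr {X Y : Type*} [MeasurableSpace X] [MeasurableSpace Y]
    (μX : Measure X) (ρ : X → Y → ℝ≥0∞) (n : ℕ) : ℝ≥0∞ :=
  ⨅ (f : X → Y)
    (_ : Measurable f ∧ ∃ s : Finset Y, s.card ≤ n ∧ ∀ x, f x ∈ s),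
    ∫⁻ x, ρ x (f x) ∂μX

lemma layercake_le {X : Type*} [MeasurableSpace X] (ν : Measure X) [SFinite ν]
    {g : X → ℝ≥0∞} (hg : Measurable g) (T : ℝ) :
    ∫⁻ t in Set.Ioo (0:ℝ) T, ν {x | ENNReal.ofReal t ≤ g x} ≤ ∫⁻ x, g x ∂ν := by
  have hSm : MeasurableSet {p : ℝ × X | ENNReal.ofReal p.1 ≤ g p.2} :=
    measurableSet_le (ENNReal.measurable_ofReal.comp measurable_fst) (hg.comp measurable_snd)
  set S : Set (ℝ × X) := {p : ℝ × X | ENNReal.ofReal p.1 ≤ g p.2} with hS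
  set F : ℝ → X → ℝ≥0∞ := fun t x => S.indicator 1 (t, x) with hF
  have hFm : Measurable (Function.uncurry F) := by
    have : Function.uncurry F = S.indicator 1 := by
      funext p; simp [Function.uncurry, hF]
    rw [this]
    exact measurable_const.indicator hSm
  have step1 : ∫⁻ t in Set.Ioo (0:ℝ) T, ν {x | ENNReal.ofReal t ≤ g x}
      = ∫⁻ t in Set.Ioo (0:ℝ) T, ∫⁻ x, F t x ∂ν := by
    refine lintegral_congr fun t => ?_
    have h1 : ∀ x, F t x = ({x | ENNReal.ofReal t ≤ g x}).indicator 1 x := by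
      intro x; simp [hF, hS, Set.indicator_apply]
    simp_rw [h1]
    rw [lintegral_indicator_one (measurableSet_le measurable_const hg)]
  rw [step1, lintegral_lintegral_swap hFm.aemeasurable]
  refine lintegral_mono fun x => ?_
  have h2 : ∀ t, F t x = ({t : ℝ | ENNReal.ofReal t ≤ g x}).indicator 1 t := by
    intro t; simp [hF, hS, Set.indicator_apply]
  simp_rw [h2]
  have hA : MeasurableSet {t : ℝ | ENNReal.ofReal t ≤ g x} :=
    measurableSet_le ENNReal.measurable_ofReal measurable_const
  rw [lintegral_indicator_one hA, Measure.restrict_apply hA]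
  rcases eq_or_ne (g x) ∞ with hgx | hgx
  · rw [hgx]; exact le_top
  · have hsub : {t : ℝ | ENNReal.ofReal t ≤ g x} ∩ Set.Ioo 0 T ⊆ Set.Ioc 0 ((g x).toReal) :=
      fun t ht => Set.mem_Ioc.mpr ⟨ht.2.1, (ENNReal.ofReal_le_iff_le_toReal hgx).1 ht.1⟩
    refine le_trans (measure_mono hsub) ?_
    rw [Real.volume_Ioc]
    simp [ENNReal.ofReal_toReal hgx]

lemma holder_bound {X : Type*} [MeasurableSpace X] (μ μX : Measure X) [SigmaFinite μ]
    [SigmaFinite μX] (hac : μX ≪ μ) (p : ℝ) (hp : 1 ≤ p) (A : Set X) (hA : MeasurableSet A) :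
    μX A ≤ lpNormENN μ (μX.rnDeriv μ) (conjExp p) * (μ A) ^ ((1:ℝ)/p) := by
  have heq : μX A = ∫⁻ x in A, μX.rnDeriv μ x ∂μ := (Measure.setLIntegral_rnDeriv hac A).symm
  rcases eq_or_lt_of_le hp with hp1 | hp1
  · -- p = 1
    have hc : conjExp p = ∞ := by simp [conjExp, ← hp1]
    rw [hc]
    simp only [lpNormENN, if_pos rfl]
    rw [heq, ← hp1]
    have hb : ∫⁻ x in A, μX.rnDeriv μ x ∂μ ≤ ∫⁻ _ in A, essSup (μX.rnDeriv μ) μ ∂μ :=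
      lintegral_mono_ae (ae_restrict_of_ae (ENNReal.ae_le_essSup _))
    rw [setLIntegral_const] at hb
    simpa using hb
  · -- p > 1
    set q : ℝ := p / (p - 1) with hqdef
    have hq0 : 0 < q := div_pos (lt_trans one_pos hp1) (by linarith)
    have hcne : p ≠ 1 := ne_of_gt hp1
    have hc : conjExp p = ENNReal.ofReal q := by simp [conjExp, hcne]; rfl
    have hct : (conjExp p).toReal = q := by rw [hc, ENNReal.toReal_ofReal hq0.le]
    have hcnetop : conjExp p ≠ ∞ := by rw [hc]; exact ENNReal.ofReal_ne_top
    have hLp : lpNormENN μ (μX.rnDeriv μ) (conjExp p)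
        = (∫⁻ x, (μX.rnDeriv μ x) ^ q ∂μ) ^ (1/q) := by
      simp [lpNormENN, hcnetop, hct]
    have hpq : p.HolderConjugate q := (Real.holderConjugate_iff_eq_conjExponent hp1).mpr rfl
    have hind : Measurable (A.indicator (1 : X → ℝ≥0∞)) := measurable_const.indicator hA
    have hH := ENNReal.lintegral_mul_le_Lp_mul_Lq μ hpq hind.aemeasurable
      (Measure.measurable_rnDeriv μX μ).aemeasurable
    have h1 : ∫⁻ a, (A.indicator (1 : X → ℝ≥0∞) * μX.rnDeriv μ) a ∂μ
        = ∫⁻ x in A, μX.rnDeriv μ x ∂μ := by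
      rw [← lintegral_indicator hA]
      refine lintegral_congr fun x => ?_
      by_cases hx : x ∈ A <;> simp [hx]
    have h2 : ∫⁻ a, (A.indicator (1 : X → ℝ≥0∞) a) ^ p ∂μ = μ A := by
      rw [← lintegral_indicator_one hA]
      refine lintegral_congr fun x => ?_
      simp only [Set.indicator_apply]
      split_ifs <;> simp [ENNReal.zero_rpow_of_pos (lt_trans one_pos hp1)]
    rw [h1, h2] at hH
    rw [heq, hLp, mul_comm]
    exact hH

lemma sigma_ne_zero {X : Type*} [MeasurableSpace X] (μ μX : Measure X) [SigmaFinite μ]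
    [IsProbabilityMeasure μX] (hac : μX ≪ μ) (p : ℝ) (hp : 1 ≤ p) :
    lpNormENN μ (μX.rnDeriv μ) (conjExp p) ≠ 0 := by
  intro h0
  have hzero : μX.rnDeriv μ =ᵐ[μ] 0 := by
    rcases eq_or_lt_of_le hp with hp1 | hp1
    · have hc : conjExp p = ∞ := by simp [conjExp, ← hp1]
      rw [hc] at h0
      simp only [lpNormENN, if_pos rfl, if_true] at h0
      filter_upwards [ENNReal.ae_le_essSup (μX.rnDeriv μ)] with x hx
      simp only [Pi.zero_apply]
      simpa [h0] using hx
    · set q : ℝ := p / (p - 1) with hqdef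
      have hq0 : 0 < q := div_pos (lt_trans one_pos hp1) (by linarith)
      have hcne : p ≠ 1 := ne_of_gt hp1
      have hct : (conjExp p).toReal = q := by
        simp [conjExp, hcne]; exact ENNReal.toReal_ofReal hq0.le
      have hcnetop : conjExp p ≠ ∞ := by simp [conjExp, hcne]
      simp only [lpNormENN, if_neg hcnetop, hct] at h0
      have hint : ∫⁻ x, (μX.rnDeriv μ x) ^ q ∂μ = 0 := by
        rcases (ENNReal.rpow_eq_zero_iff.mp h0) with ⟨h, _⟩ | ⟨_, hlt⟩
        · exact h
        · exact absurd hlt (not_lt.mpr (by positivity))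
      have := (lintegral_eq_zero_iff ((Measure.measurable_rnDeriv μX μ).pow_const q)).mp hint
      filter_upwards [this] with x hx
      simp only [Pi.zero_apply] at hx ⊢
      rcases ENNReal.rpow_eq_zero_iff.mp hx with ⟨h, _⟩ | ⟨_, hlt⟩
      · exact h
      · exact absurd hlt (not_lt.mpr (by positivity))
  have h1 : μX Set.univ = 0 := by
    rw [← Measure.lintegral_rnDeriv hac, lintegral_congr_ae hzero]; simp
  simp at h1

/-- Lower bound on the `n`-th quantization error: if `μ_X ≪ μ` with
`Σ_p(X) = ‖dμ_X/dμ‖_{p/(p-1)}^{(μ)} < ∞` and `μ` is `ρ^{1/k}`-subregular of dimension `m`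
with constants `c, δ₀`, then
`V_n(X) ≥ min{c^{-k/m}·Σ_p(X)^{-pk/m}·n^{-pk/m}, δ₀^k}·m/(m+pk)` for all `n`. -/
theorem quantization_error_lower_bound
    {X Y : Type*} [MeasurableSpace X] [MeasurableSpace Y]
    (μ : Measure X) [SigmaFinite μ] (μX : Measure X) [IsProbabilityMeasure μX]
    (hac : μX ≪ μ)
    (ρ : X → Y → ℝ≥0∞) (hρ : Measurable (Function.uncurry ρ))
    (p : ℝ) (hp : 1 ≤ p)
    (hSig : lpNormENN μ (μX.rnDeriv μ) (conjExp p) < ∞)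
    (k m c : ℝ) (δ₀ : ℝ≥0∞) (hk : 0 < k) (hm : 0 < m) (hc : 0 < c) (hδ₀ : 0 < δ₀)
    (hsub : ∀ y : Y, ∀ t : ℝ, 0 < t → ENNReal.ofReal t < δ₀ →
      μ {x | (ρ x y) ^ (1 / k) < ENNReal.ofReal t} ≤ ENNReal.ofReal (c * t ^ m)) :
    ∀ n : ℕ, 1 ≤ n →
      min (ENNReal.ofReal (c ^ (-(k / m))) *
            (lpNormENN μ (μX.rnDeriv μ) (conjExp p)) ^ (-(p * k / m)) *
            (n : ℝ≥0∞) ^ (-(p * k / m)))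
          (δ₀ ^ k) * ENNReal.ofReal (m / (m + p * k)) ≤ quantErr μX ρ n := by
  intro n hn
  have hp0 : (0:ℝ) < p := lt_of_lt_of_le one_pos hp
  set Sig := lpNormENN μ (μX.rnDeriv μ) (conjExp p) with hSigdef
  have hSne0 : Sig ≠ 0 := sigma_ne_zero μ μX hac p hp
  have hStop : Sig ≠ ∞ := hSig.ne
  set S := Sig.toReal with hSdef
  have hS : 0 < S := ENNReal.toReal_pos hSne0 hStop
  have hSe : Sig = ENNReal.ofReal S := (ENNReal.ofReal_toReal hStop).symm
  have hn0 : (0:ℝ) < (n:ℝ) := by exact_mod_cast Nat.lt_of_lt_of_le Nat.zero_lt_one hn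
  have hn1 : (1:ℝ) ≤ (n:ℝ) := by exact_mod_cast hn
  set α := m / (p * k) with hα
  have hα0 : 0 < α := by positivity
  set C := S * ((n:ℝ) * c) ^ ((1:ℝ)/p) with hCdef
  have hC0 : 0 < C := by positivity
  set A := c ^ (-(k/m)) * S ^ (-(p*k/m)) * (n:ℝ) ^ (-(p*k/m)) with hAdef
  have hA0 : 0 < A := by positivity
  set D := if δ₀ = ∞ then A else (δ₀.toReal) ^ k with hDdef
  have hD0 : 0 < D := by
    rw [hDdef]; split
    · exact hA0
    · next h => exact Real.rpow_pos_of_pos (ENNReal.toReal_pos hδ₀.ne' h) k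
  set T := min A D with hTdef
  have hT0 : 0 < T := lt_min hA0 hD0
  have hTA : T ≤ A := min_le_left _ _
  -- exponent algebra : C * A ^ α ≤ 1
  have hCA : C * A ^ α ≤ 1 := by
    have e1 : A ^ α = c ^ ((-(k/m))*α) * S ^ ((-(p*k/m))*α) * (n:ℝ) ^ ((-(p*k/m))*α) := by
      rw [hAdef, Real.mul_rpow (by positivity) (by positivity),
        Real.mul_rpow (by positivity) (by positivity),
        ← Real.rpow_mul hc.le, ← Real.rpow_mul hS.le, ← Real.rpow_mul hn0.le]
    have e2 : (-(k/m))*α = -(1/p) := by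
      rw [hα]; field_simp
    have e3 : (-(p*k/m))*α = -1 := by
      rw [hα]; field_simp
    rw [e1, e2, e3, hCdef, Real.mul_rpow hn0.le hc.le]
    have e4 : c ^ ((1:ℝ)/p) * c ^ (-(1/p)) = 1 := by
      rw [← Real.rpow_add hc]; simp
    rw [Real.rpow_neg_one, Real.rpow_neg_one,
      show S * ((n:ℝ) ^ ((1:ℝ)/p) * c ^ ((1:ℝ)/p)) *
        (c ^ (-(1/p)) * S⁻¹ * ((n:ℝ))⁻¹)
        = (c ^ ((1:ℝ)/p) * c ^ (-(1/p))) * (S * S⁻¹) * ((n:ℝ) ^ ((1:ℝ)/p) * ((n:ℝ))⁻¹) by ring,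
      e4, mul_inv_cancel₀ hS.ne']
    simp only [one_mul]
    rw [← Real.rpow_neg_one (n:ℝ), ← Real.rpow_add hn0]
    refine Real.rpow_le_one_of_one_le_of_nonpos hn1 ?_
    have : 1/p ≤ 1 := by rw [div_le_one hp0]; exact hp
    linarith
  have hCt : ∀ t : ℝ, 0 ≤ t → t ≤ T → C * t ^ α ≤ 1 := by
    intro t ht0 htT
    have : t ^ α ≤ A ^ α := Real.rpow_le_rpow ht0 (le_trans htT hTA) hα0.le
    calc C * t ^ α ≤ C * A ^ α := by nlinarith
      _ ≤ 1 := hCA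
  -- min ≤ ofReal T
  have hofA : ENNReal.ofReal (c ^ (-(k/m))) * Sig ^ (-(p*k/m)) * (n:ℝ≥0∞) ^ (-(p*k/m))
      = ENNReal.ofReal A := by
    rw [hSe, ← ENNReal.ofReal_natCast n, ENNReal.ofReal_rpow_of_pos hS,
      ENNReal.ofReal_rpow_of_pos hn0,
      ← ENNReal.ofReal_mul (by positivity), ← ENNReal.ofReal_mul (by positivity), hAdef]
  have hminT : min (ENNReal.ofReal (c ^ (-(k/m))) * Sig ^ (-(p*k/m)) *
      (n:ℝ≥0∞) ^ (-(p*k/m))) (δ₀ ^ k) ≤ ENNReal.ofReal T := by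
    rw [hofA]
    rcases eq_or_ne δ₀ ∞ with hδ | hδ
    · have : T = A := by rw [hTdef, hDdef, if_pos hδ, min_self]
      rw [this]
      exact min_le_left _ _
    · have hδt : 0 < δ₀.toReal := ENNReal.toReal_pos hδ₀.ne' hδ
      have h1 : δ₀ ^ k = ENNReal.ofReal D := by
        rw [hDdef, if_neg hδ, ← ENNReal.ofReal_rpow_of_pos hδt, ENNReal.ofReal_toReal hδ]
      rw [h1]
      rcases le_total A D with h | h
      · rw [min_eq_left (ENNReal.ofReal_le_ofReal h), hTdef, min_eq_left h]
      · rw [min_eq_right (ENNReal.ofReal_le_ofReal h), hTdef, min_eq_right h]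
  -- main part
  rw [quantErr]
  refine le_iInf fun f => le_iInf fun hf => ?_
  obtain ⟨hfm, s, hcard, hmem⟩ := hf
  set g : X → ℝ≥0∞ := fun x => ρ x (f x) with hgdef
  have hgm : Measurable g := hρ.comp (measurable_id.prodMk hfm)
  -- tail bound
  have htail : ∀ t : ℝ, t ∈ Set.Ioo (0:ℝ) T →
      μX {x | g x < ENNReal.ofReal t} ≤ ENNReal.ofReal (C * t ^ α) := by
    intro t ht
    obtain ⟨ht0, htT⟩ := ht
    have hμy : ∀ y ∈ s, μ {x | ρ x y < ENNReal.ofReal t} ≤ ENNReal.ofReal (c * t ^ (m/k)) := by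
      intro y _
      have ht' : 0 < t ^ ((1:ℝ)/k) := Real.rpow_pos_of_pos ht0 _
      have hδlt : ENNReal.ofReal (t ^ ((1:ℝ)/k)) < δ₀ := by
        rcases eq_or_ne δ₀ ∞ with hδ | hδ
        · rw [hδ]; exact ENNReal.ofReal_lt_top
        · have hδt : 0 < δ₀.toReal := ENNReal.toReal_pos hδ₀.ne' hδ
          have htD : t < δ₀.toReal ^ k := by
            have : T ≤ D := min_le_right _ _
            rw [hDdef, if_neg hδ] at this
            linarith
          have h2 : t ^ ((1:ℝ)/k) < (δ₀.toReal ^ k) ^ ((1:ℝ)/k) :=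
            Real.rpow_lt_rpow ht0.le htD (by positivity)
          rw [← Real.rpow_mul ENNReal.toReal_nonneg, mul_one_div, div_self hk.ne',
            Real.rpow_one] at h2
          calc ENNReal.ofReal (t ^ ((1:ℝ)/k)) < ENNReal.ofReal δ₀.toReal :=
                (ENNReal.ofReal_lt_ofReal_iff hδt).mpr h2
            _ = δ₀ := ENNReal.ofReal_toReal hδ
      have hsub' := hsub y (t ^ ((1:ℝ)/k)) ht' hδlt
      have hseteq : {x | (ρ x y) ^ (1/k) < ENNReal.ofReal (t ^ ((1:ℝ)/k))}
          = {x | ρ x y < ENNReal.ofReal t} := by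
        ext x
        simp only [Set.mem_setOf_eq]
        rw [← ENNReal.ofReal_rpow_of_pos ht0]
        exact ENNReal.rpow_lt_rpow_iff (by positivity)
      rw [hseteq] at hsub'
      have hexp : (t ^ ((1:ℝ)/k)) ^ m = t ^ (m/k) := by
        rw [← Real.rpow_mul ht0.le]; congr 1; ring
      rwa [hexp] at hsub'
    have hsubset : {x | g x < ENNReal.ofReal t} ⊆ ⋃ y ∈ s, {x | ρ x y < ENNReal.ofReal t} :=
      fun x hx => Set.mem_biUnion (hmem x) hx
    have hμA : μ {x | g x < ENNReal.ofReal t} ≤ (n:ℝ≥0∞) * ENNReal.ofReal (c * t ^ (m/k)) := by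
      refine le_trans (measure_mono hsubset) (le_trans (measure_biUnion_finset_le s _) ?_)
      calc ∑ y ∈ s, μ {x | ρ x y < ENNReal.ofReal t}
          ≤ ∑ _y ∈ s, ENNReal.ofReal (c * t ^ (m/k)) := Finset.sum_le_sum hμy
        _ = (s.card : ℝ≥0∞) * ENNReal.ofReal (c * t ^ (m/k)) := by
            rw [Finset.sum_const, nsmul_eq_mul]
        _ ≤ (n:ℝ≥0∞) * ENNReal.ofReal (c * t ^ (m/k)) := by
            have : (s.card : ℝ≥0∞) ≤ (n : ℝ≥0∞) := by exact_mod_cast hcard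
            exact mul_le_mul_left this _
    have hmsA : MeasurableSet {x | g x < ENNReal.ofReal t} :=
      measurableSet_lt hgm measurable_const
    have h1 := holder_bound μ μX hac p hp _ hmsA
    have h2 : μX {x | g x < ENNReal.ofReal t}
        ≤ Sig * ((n:ℝ≥0∞) * ENNReal.ofReal (c * t ^ (m/k))) ^ ((1:ℝ)/p) := by
      refine le_trans h1 ?_
      gcongr
    refine le_trans h2 (le_of_eq ?_)
    rw [hSe, ← ENNReal.ofReal_natCast n, ← ENNReal.ofReal_mul hn0.le,
      ENNReal.ofReal_rpow_of_pos (by positivity), ← ENNReal.ofReal_mul hS.le]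
    congr 1
    rw [show (n:ℝ) * (c * t ^ (m/k)) = ((n:ℝ) * c) * t ^ (m/k) by ring,
      Real.mul_rpow (by positivity) (by positivity), ← Real.rpow_mul ht0.le,
      show (m/k) * ((1:ℝ)/p) = m/(p*k) by ring, hCdef, ← hα]
    ring
  -- survival bound
  have hsurv : ∀ t : ℝ, t ∈ Set.Ioo (0:ℝ) T →
      ENNReal.ofReal (1 - C * t ^ α) ≤ μX {x | ENNReal.ofReal t ≤ g x} := by
    intro t ht
    have hms : MeasurableSet {x | g x < ENNReal.ofReal t} :=
      measurableSet_lt hgm measurable_const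
    have hcompl : {x | ENNReal.ofReal t ≤ g x} = {x | g x < ENNReal.ofReal t}ᶜ := by
      ext x; simp [not_lt]
    rw [hcompl, prob_compl_eq_one_sub hms]
    have h2 : 1 - ENNReal.ofReal (C * t ^ α) ≤ 1 - μX {x | g x < ENNReal.ofReal t} :=
      tsub_le_tsub_left (htail t ht) 1
    refine le_trans ?_ h2
    have h3 : C * t ^ α ≤ 1 := hCt t ht.1.le ht.2.le
    have h4 : ENNReal.ofReal (1 - C * t ^ α) + ENNReal.ofReal (C * t ^ α) = 1 := by
      rw [← ENNReal.ofReal_add (by linarith) (mul_nonneg hC0.le (Real.rpow_nonneg ht.1.le _))]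
      norm_num
    exact ENNReal.le_sub_of_add_le_right ENNReal.ofReal_ne_top h4.le
  -- integral computation
  have hcont : Continuous (fun t : ℝ => 1 - C * t ^ α) :=
    continuous_const.sub (continuous_const.mul (Real.continuous_rpow_const hα0.le))
  have hintOn : IntegrableOn (fun t : ℝ => 1 - C * t ^ α) (Set.Ioo 0 T) :=
    (hcont.integrableOn_Icc (a := 0) (b := T)).mono_set Set.Ioo_subset_Icc_self
  have hnn : 0 ≤ᵐ[volume.restrict (Set.Ioo (0:ℝ) T)] (fun t : ℝ => 1 - C * t ^ α) := by
    filter_upwards [ae_restrict_mem measurableSet_Ioo] with t ht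
    have := hCt t ht.1.le ht.2.le
    simp only [Pi.zero_apply]
    linarith
  have hval : ∫ t in Set.Ioo (0:ℝ) T, (1 - C * t ^ α) = T - C * T ^ (α+1) / (α+1) := by
    rw [← integral_Ioc_eq_integral_Ioo, ← intervalIntegral.integral_of_le hT0.le]
    rw [intervalIntegral.integral_sub intervalIntegrable_const
      ((intervalIntegral.intervalIntegrable_rpow' (by linarith)).const_mul C)]
    rw [intervalIntegral.integral_const, intervalIntegral.integral_const_mul,
      integral_rpow (Or.inl (by linarith))]
    rw [Real.zero_rpow (by positivity)]
    simp
    ring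
  have hInt : ENNReal.ofReal (T - C * T ^ (α+1) / (α+1)) ≤ ∫⁻ x, g x ∂μX := by
    rw [← hval, ofReal_integral_eq_lintegral_ofReal hintOn hnn]
    refine le_trans (lintegral_mono_ae ?_) (layercake_le μX hgm T)
    filter_upwards [ae_restrict_mem measurableSet_Ioo] with t ht
    exact hsurv t ht
  -- final real inequality
  have hfinal : T * (m/(m + p*k)) ≤ T - C * T ^ (α+1) / (α+1) := by
    have hαm : m/(m + p*k) = α/(α+1) := by
      rw [hα]; field_simp
    have hTα : C * T ^ α ≤ 1 := hCt T hT0.le le_rfl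
    have hrw : T ^ (α+1) = T ^ α * T := by rw [Real.rpow_add hT0, Real.rpow_one]
    have h1α : (0:ℝ) < α + 1 := by linarith
    have h2' : C * (T ^ α * T) ≤ T := by nlinarith
    have h3 : C * (T ^ α * T) / (α+1) ≤ T / (α+1) := by gcongr
    have key : T * (α/(α+1)) = T - T/(α+1) := by field_simp; ring
    rw [hαm, hrw]
    linarith
  calc min (ENNReal.ofReal (c ^ (-(k/m))) * Sig ^ (-(p*k/m)) * (n:ℝ≥0∞) ^ (-(p*k/m))) (δ₀ ^ k)
        * ENNReal.ofReal (m/(m + p*k))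
      ≤ ENNReal.ofReal T * ENNReal.ofReal (m/(m + p*k)) := mul_le_mul_left hminT _
    _ = ENNReal.ofReal (T * (m/(m + p*k))) := (ENNReal.ofReal_mul hT0.le).symm
    _ ≤ ENNReal.ofReal (T - C * T ^ (α+1) / (α+1)) := ENNReal.ofReal_le_ofReal hfinal
    _ ≤ ∫⁻ x, g x ∂μX := hInt
    _ = ∫⁻ x, ρ x (f x) ∂μX := rfl
end

section
/- Let (X,𝒳) be a measurable space, let (Y,𝒴,ν) be a finite measure space with ν(Y) = 1, and let ρ: X×Y → [0,∞] be a measurable distortion function. Let k ∈ (0,∞), suppose ν is ρ^{1/k}-superregular of dimension m ∈ (0,∞) with superregularity constants b ∈ (0,∞) and δ₀ ∈ (0,∞], and assume β := sup_{x∈X,y∈Y} ρ(x,y)^{1/k} < ∞ whenever δ₀ < ∞. Then every random variable X taking values in (X,𝒳) satisfies, for all n ∈ ℕ: V_n(X) ≤ Γ(1+k/m)·(b·n)^{-k/m} if β ≤ δ₀, and V_n(X) ≤ Γ(1+k/m)·(b·n)^{-k/m} + (β^k − δ₀^k)·e^{-b·n·δ₀^m} if β > δ₀. -/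
open MeasureTheory Set
open scoped ENNReal Classical

lemma aux_integrableOn_exp_neg_mul_rpow {p c : ℝ} (hp : 0 < p) (hc : 0 < c) :
    IntegrableOn (fun x : ℝ => Real.exp (-c * x ^ p)) (Ioi 0) := by
  have hint : IntegrableOn (fun u : ℝ => u ^ (1 / p - 1) * Real.exp (-c * u)) (Ioi 0) := by
    have := integrableOn_rpow_mul_exp_neg_mul_rpow
      (by have := one_div_pos.mpr hp; linarith : (-1 : ℝ) < 1 / p - 1) one_pos hc
    refine this.congr_fun (fun x hx => ?_) measurableSet_Ioi
    dsimp only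
    rw [Real.rpow_one]
  have h := (integrableOn_Ioi_comp_rpow_iff'
      (fun u : ℝ => u ^ (1 / p - 1) * Real.exp (-c * u)) hp.ne').mpr hint
  refine h.congr_fun (fun x hx => ?_) measurableSet_Ioi
  have hx0 : (0 : ℝ) < x := hx
  dsimp only
  rw [smul_eq_mul, ← Real.rpow_mul hx0.le, ← mul_assoc, ← Real.rpow_add hx0,
    show p - 1 + p * (1 / p - 1) = 0 by field_simp; ring, Real.rpow_zero, one_mul]

lemma aux_gamma {k m b : ℝ} (hk : 0 < k) (hm : 0 < m) (hb : 0 < b) (n : ℕ) (hn : 1 ≤ n) :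
    ∫⁻ t in Ioi (0:ℝ), ENNReal.ofReal (Real.exp (-((n:ℝ)*b) * t ^ (m/k))) =
      ENNReal.ofReal (Real.Gamma (1 + k/m)) * (ENNReal.ofReal b * (n:ℝ≥0∞)) ^ (-(k/m)) := by
  have hc : (0:ℝ) < (n:ℝ) * b := by
    have : (0:ℝ) < (n:ℝ) := by exact_mod_cast hn
    positivity
  have hkm : (0:ℝ) < m / k := div_pos hm hk
  rw [← ofReal_integral_eq_lintegral_ofReal
      (aux_integrableOn_exp_neg_mul_rpow hkm hc)
      (Filter.Eventually.of_forall fun t => (Real.exp_pos _).le),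
    integral_exp_neg_mul_rpow hkm hc]
  have e1 : 1 / (m / k) = k / m := one_div_div m k
  have e2 : -1 / (m / k) = -(k / m) := by rw [neg_div, e1]
  rw [e1, e2, ENNReal.ofReal_mul (Real.rpow_nonneg hc.le _), mul_comm,
    ← ENNReal.ofReal_rpow_of_pos hc, ENNReal.ofReal_mul (Nat.cast_nonneg n),
    ENNReal.ofReal_natCast, mul_comm ((n:ℝ≥0∞)) _, add_comm (k/m) 1]

lemma aux_nearest {X Y : Type*} [MeasurableSpace X] [MeasurableSpace Y]
    (ρ : X → Y → ℝ≥0∞) (hρ : Measurable (Function.uncurry ρ))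
    {n : ℕ} (hn : 0 < n) (y : Fin n → Y) :
    ∃ f : X → Y, (Measurable f ∧ ∃ s : Finset Y, s.card ≤ n ∧ ∀ x, f x ∈ s) ∧
      ∀ x, ρ x (f x) = ⨅ i, ρ x (y i) := by
  haveI : NeZero n := ⟨hn.ne'⟩
  set g : Fin n → X → ℝ≥0∞ := fun i x => ρ x (y i) with hg
  have hgm : ∀ i, Measurable (g i) := fun i =>
    hρ.comp (measurable_id.prodMk measurable_const)
  have hPne : ∀ x : X, (Finset.univ.filter (fun i => ∀ j, g i x ≤ g j x)).Nonempty := by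
    intro x
    obtain ⟨i, -, hi⟩ := Finset.exists_min_image Finset.univ (fun i => g i x)
      ⟨0, Finset.mem_univ 0⟩
    exact ⟨i, Finset.mem_filter.2 ⟨Finset.mem_univ _, fun j => hi j (Finset.mem_univ j)⟩⟩
  set idx : X → Fin n := fun x =>
    (Finset.univ.filter (fun i => ∀ j, g i x ≤ g j x)).min' (hPne x) with hidx
  have hidxP : ∀ x, ∀ j, g (idx x) x ≤ g j x := by
    intro x
    have := Finset.min'_mem _ (hPne x)
    exact (Finset.mem_filter.1 this).2
  have hidx_eq : ∀ x i, idx x = i ↔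
      ((∀ j, g i x ≤ g j x) ∧ ∀ j, j < i → ¬ (∀ j', g j x ≤ g j' x)) := by
    intro x i
    constructor
    · rintro rfl
      refine ⟨hidxP x, fun j hj hPj => ?_⟩
      have : idx x ≤ j := Finset.min'_le _ _ (Finset.mem_filter.2 ⟨Finset.mem_univ _, hPj⟩)
      exact absurd hj (not_lt.2 this)
    · rintro ⟨hPi, hleast⟩
      have h1 : idx x ≤ i := Finset.min'_le _ _ (Finset.mem_filter.2 ⟨Finset.mem_univ _, hPi⟩)
      have h2 : ¬ idx x < i := fun h => hleast _ h (hidxP x)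
      exact le_antisymm h1 (not_lt.1 h2)
  have hidxm : Measurable idx := by
    apply measurable_to_countable'
    intro i
    have hset : idx ⁻¹' {i} = ({x | ∀ j, g i x ≤ g j x} ∩
        ⋂ (j : Fin n) (_ : j < i), {x | ∀ j', g j x ≤ g j' x}ᶜ) := by
      ext x
      simp only [mem_preimage, mem_singleton_iff, hidx_eq x i, mem_inter_iff, mem_setOf_eq,
        mem_iInter, mem_compl_iff]
    rw [hset]
    have hPm : ∀ i : Fin n, MeasurableSet {x | ∀ j, g i x ≤ g j x} := by
      intro i
      have : {x | ∀ j, g i x ≤ g j x} = ⋂ j, {x | g i x ≤ g j x} := by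
        ext x; simp [mem_iInter]
      rw [this]
      exact MeasurableSet.iInter fun j => measurableSet_le (hgm i) (hgm j)
    exact (hPm i).inter (MeasurableSet.iInter fun j =>
      MeasurableSet.iInter fun _ => (hPm j).compl)
  refine ⟨fun x => y (idx x), ⟨measurable_from_top.comp hidxm, Finset.univ.image y,
    le_trans Finset.card_image_le (by simp), fun x => Finset.mem_image_of_mem y (Finset.mem_univ _)⟩,
    fun x => ?_⟩
  exact le_antisymm (le_iInf fun j => hidxP x j) (iInf_le _ (idx x))

noncomputable def expNeg (t : ℝ≥0∞) : ℝ≥0∞ :=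
  if t = ∞ then 0 else ENNReal.ofReal (Real.exp (-t.toReal))

/-- Upper bound on the `n`-th quantization error: if `ν` is a
probability measure on `Y` that is `ρ^{1/k}`-superregular of dimension `m` with constants
`b, δ₀`, and `β = sup_{x,y} ρ(x,y)^{1/k} < ∞` whenever `δ₀ < ∞`, then for every random
variable `X` with values in `X` and every `n ∈ ℕ`:
`V_n(X) ≤ Γ(1+k/m)·(b·n)^{-k/m}` if `β ≤ δ₀`, and
`V_n(X) ≤ Γ(1+k/m)·(b·n)^{-k/m} + (β^k − δ₀^k)·e^{-b·n·δ₀^m}` if `β > δ₀`. -/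
theorem quantization_error_upper_bound
    {X Y : Type*} [MeasurableSpace X] [MeasurableSpace Y]
    (ν : Measure Y) [IsProbabilityMeasure ν]
    (ρ : X → Y → ℝ≥0∞) (hρ : Measurable (Function.uncurry ρ))
    (k m b : ℝ) (δ₀ : ℝ≥0∞) (hk : 0 < k) (hm : 0 < m) (hb : 0 < b) (hδ₀ : 0 < δ₀)
    (hsup : ∀ x : X, ∀ t : ℝ, 0 < t → ENNReal.ofReal t < δ₀ →
      ENNReal.ofReal (b * t ^ m) ≤ ν {y | (ρ x y) ^ (1 / k) < ENNReal.ofReal t})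
    (hβ : δ₀ < ∞ → (⨆ x : X, ⨆ y : Y, (ρ x y) ^ (1 / k)) < ∞)
    (μX : Measure X) [IsProbabilityMeasure μX] :
    ∀ n : ℕ, 1 ≤ n →
      ((⨆ x : X, ⨆ y : Y, (ρ x y) ^ (1 / k)) ≤ δ₀ →
        quantErr μX ρ n ≤
          ENNReal.ofReal (Real.Gamma (1 + k / m)) *
            (ENNReal.ofReal b * (n : ℝ≥0∞)) ^ (-(k / m))) ∧
      (δ₀ < (⨆ x : X, ⨆ y : Y, (ρ x y) ^ (1 / k)) →
        quantErr μX ρ n ≤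
          ENNReal.ofReal (Real.Gamma (1 + k / m)) *
            (ENNReal.ofReal b * (n : ℝ≥0∞)) ^ (-(k / m)) +
          ((⨆ x : X, ⨆ y : Y, (ρ x y) ^ (1 / k)) ^ k - δ₀ ^ k) *
            expNeg (ENNReal.ofReal b * (n : ℝ≥0∞) * δ₀ ^ m)) := by
  intro n hn
  have hn0 : 0 < n := hn
  haveI : NeZero n := ⟨hn0.ne'⟩
  have hXne : Nonempty X := by
    rcases isEmpty_or_nonempty X with h | h
    · exfalso
      have h1 : μX Set.univ = 1 := measure_univ
      rw [Set.univ_eq_empty_iff.2 h, measure_empty] at h1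
      exact zero_ne_one h1
    · exact h
  obtain ⟨x₀⟩ := hXne
  set β := ⨆ x : X, ⨆ y : Y, (ρ x y) ^ (1 / k) with hβdef
  -- δ₀ is finite
  have hδtop : δ₀ ≠ ∞ := by
    intro hinf
    set t : ℝ := (2 / b) ^ (1 / m) with htdef
    have ht : 0 < t := Real.rpow_pos_of_pos (by positivity) _
    have htm : b * t ^ m = 2 := by
      rw [htdef, ← Real.rpow_mul (by positivity), one_div_mul_cancel hm.ne', Real.rpow_one]
      field_simp
    have h1 := hsup x₀ t ht (by rw [hinf]; exact ENNReal.ofReal_lt_top)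
    rw [htm] at h1
    have h2 : (ENNReal.ofReal 2 : ℝ≥0∞) ≤ 1 := h1.trans prob_le_one
    rw [show (ENNReal.ofReal 2 : ℝ≥0∞) = 2 by norm_num] at h2
    norm_num at h2
  have hβtop : β ≠ ∞ := (hβ (lt_top_iff_ne_top.2 hδtop)).ne
  set B := β.toReal with hBdef
  set d := δ₀.toReal with hddef
  have hd : 0 < d := ENNReal.toReal_pos hδ₀.ne' hδtop
  have hδ₀eq : δ₀ = ENNReal.ofReal d := (ENNReal.ofReal_toReal hδtop).symm
  have hB0 : 0 ≤ B := ENNReal.toReal_nonneg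
  have hρβ : ∀ x y, ρ x y ≤ β ^ k := by
    intro x y
    have h1 : (ρ x y) ^ (1/k) ≤ β := by
      calc (ρ x y) ^ (1/k) ≤ ⨆ y', (ρ x y') ^ (1/k) := le_iSup (fun y' => (ρ x y') ^ (1/k)) y
        _ ≤ β := le_iSup (fun x' => ⨆ y', (ρ x' y') ^ (1/k)) x
    have h2 : ((ρ x y) ^ (1/k)) ^ k = ρ x y := by
      rw [← ENNReal.rpow_mul, one_div_mul_cancel hk.ne', ENNReal.rpow_one]
    calc ρ x y = ((ρ x y) ^ (1/k)) ^ k := h2.symm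
      _ ≤ β ^ k := ENNReal.rpow_le_rpow h1 hk.le
  have hβk_top : β ^ k ≠ ∞ := (ENNReal.rpow_lt_top_of_nonneg hk.le hβtop).ne
  have hBk : (β ^ k).toReal = B ^ k := (ENNReal.toReal_rpow β k).symm
  -- the product measure
  set π := Measure.pi (fun _ : Fin n => ν) with hπdef
  haveI : IsProbabilityMeasure π := by rw [hπdef]; infer_instance
  have hρx : ∀ x, Measurable (ρ x) := fun x => hρ.comp (measurable_const.prodMk measurable_id)
  have hgm : ∀ x, Measurable (fun yv : Fin n → Y => ⨅ i, ρ x (yv i)) := fun x =>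
    Measurable.iInf (fun i => (hρx x).comp (measurable_pi_apply i))
  have hgle : ∀ (x : X) (yv : Fin n → Y), (⨅ i, ρ x (yv i)) ≤ β ^ k := fun x yv =>
    (iInf_le _ (0 : Fin n)).trans (hρβ _ _)
  have hgtop : ∀ (x : X) (yv : Fin n → Y), (⨅ i, ρ x (yv i)) ≠ ∞ := fun x yv =>
    ((hgle x yv).trans_lt (lt_top_iff_ne_top.2 hβk_top)).ne
  -- layer cake
  have hlayer : ∀ x, ∫⁻ yv, (⨅ i, ρ x (yv i)) ∂π
      = ∫⁻ t in Ioi (0:ℝ), π {yv | t < (⨅ i, ρ x (yv i)).toReal} := by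
    intro x
    rw [← lintegral_eq_lintegral_meas_lt π
      (Filter.Eventually.of_forall fun yv => ENNReal.toReal_nonneg)
      ((hgm x).ennreal_toReal.aemeasurable)]
    exact lintegral_congr fun yv => (ENNReal.ofReal_toReal (hgtop x yv)).symm
  -- tail bound for small t
  have htail1 : ∀ (x : X) (t : ℝ), 0 < t → t ^ (1/k) < d →
      π {yv | t < (⨅ i, ρ x (yv i)).toReal}
        ≤ ENNReal.ofReal (Real.exp (-((n:ℝ)*b) * t ^ (m/k))) := by
    intro x t ht hts
    set s := t ^ (1/k) with hs
    have hs0 : 0 < s := Real.rpow_pos_of_pos ht _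
    set S := {y : Y | ENNReal.ofReal t < ρ x y} with hSdef
    have hSm : MeasurableSet S := measurableSet_lt measurable_const (hρx x)
    have hsub : {yv : Fin n → Y | t < (⨅ i, ρ x (yv i)).toReal}
        ⊆ Set.univ.pi (fun _ : Fin n => S) := by
      intro yv hyv
      have h1 : ENNReal.ofReal t < ⨅ i, ρ x (yv i) :=
        (ENNReal.ofReal_lt_iff_lt_toReal ht.le (hgtop x yv)).2 hyv
      intro i _
      exact h1.trans_le (iInf_le _ i)
    have hprod : π (Set.univ.pi (fun _ : Fin n => S)) = (ν S) ^ n := by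
      rw [hπdef, Measure.pi_pi]
      simp
    have hsm : s ^ m = t ^ (m/k) := by
      rw [hs, ← Real.rpow_mul ht.le]
      congr 1
      ring
    have hνS : ν S ≤ ENNReal.ofReal (Real.exp (-(b * t ^ (m/k)))) := by
      have hsc : {y : Y | (ρ x y) ^ (1/k) < ENNReal.ofReal s} ⊆ Sᶜ := by
        intro y hy
        simp only [hSdef, mem_compl_iff, mem_setOf_eq, not_lt]
        have h2 : ((ρ x y) ^ (1/k)) ^ k = ρ x y := by
          rw [← ENNReal.rpow_mul, one_div_mul_cancel hk.ne', ENNReal.rpow_one]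
        have h3 : (ENNReal.ofReal s) ^ k = ENNReal.ofReal t := by
          rw [ENNReal.ofReal_rpow_of_pos hs0, hs, ← Real.rpow_mul ht.le,
            one_div_mul_cancel hk.ne', Real.rpow_one]
        calc ρ x y = ((ρ x y) ^ (1/k)) ^ k := h2.symm
          _ ≤ (ENNReal.ofReal s) ^ k := ENNReal.rpow_le_rpow (le_of_lt hy) hk.le
          _ = ENNReal.ofReal t := h3
      have hc : ENNReal.ofReal (b * s ^ m) ≤ ν Sᶜ := by
        refine le_trans (hsup x s hs0 ?_) (measure_mono hsc)
        rw [hδ₀eq]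
        exact (ENNReal.ofReal_lt_ofReal_iff hd).2 hts
      have hsum := measure_add_measure_compl (μ := ν) hSm
      rw [measure_univ] at hsum
      have h4 : ν S + ENNReal.ofReal (b * s ^ m) ≤ 1 := by
        calc ν S + ENNReal.ofReal (b * s ^ m) ≤ ν S + ν Sᶜ := add_le_add le_rfl hc
          _ = 1 := hsum
      have h5 : ν S ≤ 1 - ENNReal.ofReal (b * s ^ m) :=
        ENNReal.le_sub_of_add_le_right ENNReal.ofReal_ne_top h4
      have h6 : (1:ℝ≥0∞) - ENNReal.ofReal (b * s ^ m) = ENNReal.ofReal (1 - b * s ^ m) := by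
        rw [ENNReal.ofReal_sub _ (by positivity : (0:ℝ) ≤ b * s ^ m), ENNReal.ofReal_one]
      calc ν S ≤ 1 - ENNReal.ofReal (b * s ^ m) := h5
        _ = ENNReal.ofReal (1 - b * s ^ m) := h6
        _ ≤ ENNReal.ofReal (Real.exp (-(b * s ^ m))) := ENNReal.ofReal_le_ofReal (by
            have := Real.add_one_le_exp (-(b * s ^ m)); linarith)
        _ = ENNReal.ofReal (Real.exp (-(b * t ^ (m/k)))) := by rw [hsm]
    calc π {yv | t < (⨅ i, ρ x (yv i)).toReal}
        ≤ π (Set.univ.pi (fun _ : Fin n => S)) := measure_mono hsub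
      _ = (ν S) ^ n := hprod
      _ ≤ (ENNReal.ofReal (Real.exp (-(b * t ^ (m/k))))) ^ n := pow_le_pow_left' hνS n
      _ = ENNReal.ofReal ((Real.exp (-(b * t ^ (m/k)))) ^ n) :=
          (ENNReal.ofReal_pow (Real.exp_pos _).le n).symm
      _ = ENNReal.ofReal (Real.exp (-((n:ℝ)*b) * t ^ (m/k))) := by
          rw [← Real.exp_nat_mul]; congr 1; ring
  -- tail is zero for large t
  have htail0 : ∀ (x : X) (t : ℝ), B ^ k ≤ t →
      π {yv | t < (⨅ i, ρ x (yv i)).toReal} = 0 := by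
    intro x t htB
    have hempty : {yv : Fin n → Y | t < (⨅ i, ρ x (yv i)).toReal} = ∅ := by
      refine eq_empty_iff_forall_notMem.2 fun yv hyv => ?_
      have hlt : t < (⨅ i, ρ x (yv i)).toReal := hyv
      refine absurd hlt (not_lt.2 ?_)
      calc (⨅ i, ρ x (yv i)).toReal ≤ (β ^ k).toReal :=
            ENNReal.toReal_mono hβk_top (hgle x yv)
        _ = B ^ k := hBk
        _ ≤ t := htB
    rw [hempty, measure_empty]
  -- tail bound at the threshold, by approximation
  have htail2 : ∀ (x : X) (t : ℝ), d ^ k ≤ t →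
      π {yv | t < (⨅ i, ρ x (yv i)).toReal}
        ≤ ENNReal.ofReal (Real.exp (-((n:ℝ)*b) * d ^ m)) := by
    intro x t htd
    haveI : (nhdsWithin d (Iio d)).NeBot := nhdsLT_neBot d
    refine ge_of_tendsto (x := nhdsWithin d (Iio d)) (f := fun s : ℝ => ENNReal.ofReal (Real.exp (-((n:ℝ)*b) * s ^ m))) ?_ ?_
    · have hcont : ContinuousAt (fun s : ℝ =>
          ENNReal.ofReal (Real.exp (-((n:ℝ)*b) * s ^ m))) d := by
        exact ENNReal.continuous_ofReal.continuousAt.comp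
          (Real.continuous_exp.continuousAt.comp
            (continuousAt_const.mul (Real.continuousAt_rpow_const d m (Or.inl hd.ne'))))
      exact hcont.tendsto.mono_left nhdsWithin_le_nhds
    · filter_upwards [Ioo_mem_nhdsLT_of_mem (⟨hd, le_refl d⟩ : d ∈ Ioc 0 d)] with s hs
      have hs0 : 0 < s := hs.1
      have hsd : s < d := hs.2
      have h1 : s ^ k < t := lt_of_lt_of_le (Real.rpow_lt_rpow hs0.le hsd hk) htd
      have hsk : (s ^ k) ^ (1/k) = s := by
        rw [← Real.rpow_mul hs0.le, mul_one_div, div_self hk.ne', Real.rpow_one]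
      have h2 := htail1 x (s ^ k) (Real.rpow_pos_of_pos hs0 k) (by rw [hsk]; exact hsd)
      have h3 : (s ^ k) ^ (m/k) = s ^ m := by
        rw [← Real.rpow_mul hs0.le]
        congr 1
        rw [mul_comm]; exact div_mul_cancel₀ m hk.ne'
      calc π {yv | t < (⨅ i, ρ x (yv i)).toReal}
          ≤ π {yv | s ^ k < (⨅ i, ρ x (yv i)).toReal} :=
            measure_mono (fun yv hyv => h1.trans hyv)
        _ ≤ ENNReal.ofReal (Real.exp (-((n:ℝ)*b) * (s ^ k) ^ (m/k))) := h2
        _ = ENNReal.ofReal (Real.exp (-((n:ℝ)*b) * s ^ m)) := by rw [h3]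
  -- reduction to the per-point bound
  have houter : ∀ R : ℝ≥0∞, (∀ x, ∫⁻ yv, (⨅ i, ρ x (yv i)) ∂π ≤ R) →
      quantErr μX ρ n ≤ R := by
    intro R hR
    have h2 : ∀ yv : Fin n → Y, quantErr μX ρ n ≤ ∫⁻ x, (⨅ i, ρ x (yv i)) ∂μX := by
      intro yv
      obtain ⟨f, hf, hval⟩ := aux_nearest ρ hρ hn0 yv
      calc quantErr μX ρ n ≤ ∫⁻ x, ρ x (f x) ∂μX := iInf_le_of_le f (iInf_le _ hf)
        _ = ∫⁻ x, (⨅ i, ρ x (yv i)) ∂μX := lintegral_congr fun x => hval x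
    have hswap : ∫⁻ yv, ∫⁻ x, (⨅ i, ρ x (yv i)) ∂μX ∂π
        = ∫⁻ x, ∫⁻ yv, (⨅ i, ρ x (yv i)) ∂π ∂μX := by
      exact lintegral_lintegral_swap (Measurable.aemeasurable (Measurable.iInf fun i =>
        hρ.comp (measurable_snd.prodMk ((measurable_pi_apply i).comp measurable_fst))))
    calc quantErr μX ρ n = ∫⁻ _ : Fin n → Y, quantErr μX ρ n ∂π := by
          rw [lintegral_const, measure_univ, mul_one]
      _ ≤ ∫⁻ yv, ∫⁻ x, (⨅ i, ρ x (yv i)) ∂μX ∂π := lintegral_mono h2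
      _ = ∫⁻ x, ∫⁻ yv, (⨅ i, ρ x (yv i)) ∂π ∂μX := hswap
      _ ≤ ∫⁻ _ : X, R ∂μX := lintegral_mono hR
      _ = R := by rw [lintegral_const, measure_univ, mul_one]
  constructor
  · -- case β ≤ δ₀
    intro hcase
    have hBd : B ≤ d := ENNReal.toReal_mono hδtop hcase
    refine houter _ fun x => ?_
    rw [hlayer x]
    calc ∫⁻ t in Ioi (0:ℝ), π {yv | t < (⨅ i, ρ x (yv i)).toReal}
        ≤ ∫⁻ t in Ioi (0:ℝ), ENNReal.ofReal (Real.exp (-((n:ℝ)*b) * t ^ (m/k))) := by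
          refine setLIntegral_mono' measurableSet_Ioi fun t ht => ?_
          have ht0 : (0:ℝ) < t := ht
          by_cases h : t ^ (1/k) < d
          · exact htail1 x t ht0 h
          · push_neg at h
            have hBt : B ^ k ≤ t := by
              calc B ^ k ≤ (t ^ (1/k)) ^ k :=
                    Real.rpow_le_rpow hB0 (hBd.trans h) hk.le
                _ = t := by
                    rw [← Real.rpow_mul ht0.le, one_div_mul_cancel hk.ne', Real.rpow_one]
            rw [htail0 x t hBt]
            exact bot_le
      _ = _ := aux_gamma hk hm hb n hn
  · -- case δ₀ < β
    intro hcase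
    have hβ0 : β ≠ 0 := (hδ₀.trans hcase).ne'
    have hB0' : 0 < B := ENNReal.toReal_pos hβ0 hβtop
    refine houter _ fun x => ?_
    rw [hlayer x]
    have hdk : (0:ℝ) < d ^ k := Real.rpow_pos_of_pos hd k
    set C := ENNReal.ofReal (Real.exp (-((n:ℝ)*b) * d ^ m)) with hCdef
    have hdisj : Disjoint (Ioo (0:ℝ) (d ^ k)) (Ici (d ^ k)) :=
      disjoint_left.2 fun a ha ha' => absurd ha.2 (not_lt.2 ha')
    rw [← Set.Ioo_union_Ici_eq_Ioi hdk, lintegral_union measurableSet_Ici hdisj]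
    have hpart1 : ∫⁻ t in Ioo (0:ℝ) (d ^ k), π {yv | t < (⨅ i, ρ x (yv i)).toReal}
        ≤ ENNReal.ofReal (Real.Gamma (1 + k / m)) *
            (ENNReal.ofReal b * (n : ℝ≥0∞)) ^ (-(k / m)) := by
      calc ∫⁻ t in Ioo (0:ℝ) (d ^ k), π {yv | t < (⨅ i, ρ x (yv i)).toReal}
          ≤ ∫⁻ t in Ioo (0:ℝ) (d ^ k),
              ENNReal.ofReal (Real.exp (-((n:ℝ)*b) * t ^ (m/k))) := by
            refine setLIntegral_mono' measurableSet_Ioo fun t ht => ?_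
            refine htail1 x t ht.1 ?_
            calc t ^ (1/k) < (d ^ k) ^ (1/k) :=
                  Real.rpow_lt_rpow ht.1.le ht.2 (one_div_pos.2 hk)
              _ = d := by
                  rw [← Real.rpow_mul hd.le, mul_one_div, div_self hk.ne', Real.rpow_one]
        _ ≤ ∫⁻ t in Ioi (0:ℝ), ENNReal.ofReal (Real.exp (-((n:ℝ)*b) * t ^ (m/k))) :=
            lintegral_mono_set Ioo_subset_Ioi_self
        _ = _ := aux_gamma hk hm hb n hn
    have hpart2 : ∫⁻ t in Ici (d ^ k), π {yv | t < (⨅ i, ρ x (yv i)).toReal}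
        ≤ C * ENNReal.ofReal (B ^ k - d ^ k) := by
      calc ∫⁻ t in Ici (d ^ k), π {yv | t < (⨅ i, ρ x (yv i)).toReal}
          ≤ ∫⁻ t in Ici (d ^ k), (Ico (d ^ k) (B ^ k)).indicator (fun _ => C) t := by
            refine setLIntegral_mono' measurableSet_Ici fun t ht => ?_
            by_cases htB : t < B ^ k
            · exact le_trans (htail2 x t ht)
                (le_of_eq (Set.indicator_of_mem
                  (⟨ht, htB⟩ : t ∈ Ico (d ^ k) (B ^ k)) (fun _ => C)).symm)
            · rw [htail0 x t (not_lt.1 htB)]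
              exact bot_le
        _ ≤ ∫⁻ t, (Ico (d ^ k) (B ^ k)).indicator (fun _ => C) t :=
            setLIntegral_le_lintegral _ _
        _ = C * volume (Ico (d ^ k) (B ^ k)) := lintegral_indicator_const measurableSet_Ico C
        _ = C * ENNReal.ofReal (B ^ k - d ^ k) := by rw [Real.volume_Ico]
    refine le_trans (add_le_add hpart1 hpart2) (add_le_add le_rfl (le_of_eq ?_))
    have hβkeq : β ^ k = ENNReal.ofReal (B ^ k) := by
      rw [← hBk, ENNReal.ofReal_toReal hβk_top]
    have hδkeq : δ₀ ^ k = ENNReal.ofReal (d ^ k) := by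
      rw [hδ₀eq, ENNReal.ofReal_rpow_of_pos hd]
    have harg : ENNReal.ofReal b * (n : ℝ≥0∞) * δ₀ ^ m ≠ ∞ := by
      refine ENNReal.mul_ne_top (ENNReal.mul_ne_top ENNReal.ofReal_ne_top ?_) ?_
      · exact ENNReal.natCast_ne_top n
      · exact (ENNReal.rpow_lt_top_of_nonneg hm.le hδtop).ne
    have hargval : (ENNReal.ofReal b * (n : ℝ≥0∞) * δ₀ ^ m).toReal = b * n * d ^ m := by
      rw [ENNReal.toReal_mul, ENNReal.toReal_mul, ENNReal.toReal_ofReal hb.le,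
        ← ENNReal.toReal_rpow]
      simp [hddef]
    have hCeq : expNeg (ENNReal.ofReal b * (n : ℝ≥0∞) * δ₀ ^ m) = C := by
      rw [expNeg, if_neg harg, hargval, hCdef]
      congr 2
      ring
    rw [hβkeq, hδkeq, ← ENNReal.ofReal_sub _ (Real.rpow_nonneg hd.le k), hCeq, mul_comm]
end

section
/- Let X be a random variable taking values in a σ-finite measure space (X,𝒳,μ) with μ_X ≪ μ, and assume ‖dμ_X/dμ‖_∞^{(μ)} < ∞ or |h_μ(X)| < ∞. Let (Y,𝒴,ν) be a finite measure space and ρ: X×Y → [0,∞] a measurable distortion function. Let k, m, c, b ∈ (0,∞) and δ₀ ∈ (0,∞], and suppose: (i) μ is ρ^{1/k}-subregular of dimension m with subregularity constants c and δ₀; (ii) ν is ρ^{1/k}-superregular of dimension m with superregularity constants b and δ₀; (iii) sup_{x∈X,y∈Y} ρ(x,y)^{1/k} < ∞ if δ₀ < ∞; and (iv) μ(X) = 1 if both δ₀ < ∞ and ‖dμ_X/dμ‖_∞^{(μ)} = ∞. Then the k-th quantization dimension exists and equals m, i.e., lim_{n→∞} k·log(n)/log(1/V_n(X)) = m. -/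
open MeasureTheory Filter
open scoped ENNReal Classical

/-- The quantity `k·log n / log(1/V_n(X))`, whose `liminf`/`limsup` as `n → ∞` are the
lower/upper `k`-th quantization dimensions. -/
noncomputable def qRatio {X Y : Type*} [MeasurableSpace X] [MeasurableSpace Y]
    (μX : Measure X) (ρ : X → Y → ℝ≥0∞) (k : ℝ) (n : ℕ) : ℝ :=
  k * Real.log n / Real.log (1 / (quantErr μX ρ n).toReal)

open Topology

lemma exists_trunc_level {X : Type*} [MeasurableSpace X] (μ : Measure X) [SigmaFinite μ]
    (μX : Measure X) [IsProbabilityMeasure μX] (hac : μX ≪ μ) :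
    ∃ M : ℝ, 1 ≤ M ∧ (1:ℝ≥0∞)/2 ≤ μX {x | μX.rnDeriv μ x ≤ ENNReal.ofReal M} := by
  have hfin : ∀ᵐ x ∂μX, μX.rnDeriv μ x < ∞ := hac.ae_le (Measure.rnDeriv_lt_top μX μ)
  have hmono : Monotone (fun M : ℕ => {x | μX.rnDeriv μ x ≤ (M : ℝ≥0∞)}) := by
    intro a b hab x hx
    exact le_trans (Set.mem_setOf.1 hx) (by exact_mod_cast Nat.cast_le.mpr hab)
  have hunion : {x | μX.rnDeriv μ x < ∞} ⊆ ⋃ M : ℕ, {x | μX.rnDeriv μ x ≤ (M : ℝ≥0∞)} := by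
    intro x hx
    rcases ENNReal.exists_nat_gt (Set.mem_setOf.1 hx).ne with ⟨M, hM⟩
    exact Set.mem_iUnion.2 ⟨M, hM.le⟩
  have h1 : (1:ℝ≥0∞) = μX (⋃ M : ℕ, {x | μX.rnDeriv μ x ≤ (M : ℝ≥0∞)}) := by
    refine le_antisymm ?_ (le_trans (measure_mono (Set.subset_univ _)) (by simp))
    calc (1:ℝ≥0∞) = μX {x | μX.rnDeriv μ x < ∞} := by
          rw [← measure_univ (μ := μX)]
          exact (measure_congr (hfin.mono fun x hx => by
            exact propext (iff_of_true hx trivial))).symm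
      _ ≤ _ := measure_mono hunion
  rw [hmono.directed_le.measure_iUnion] at h1
  have h2 : (1:ℝ≥0∞)/2 < ⨆ M : ℕ, μX {x | μX.rnDeriv μ x ≤ (M : ℝ≥0∞)} := by
    rw [← h1]; norm_num
  obtain ⟨M, hM⟩ := lt_iSup_iff.1 h2
  refine ⟨max M 1, le_max_right _ _, le_trans hM.le (measure_mono fun x hx => ?_)⟩
  refine le_trans (Set.mem_setOf.1 hx) ?_
  rw [show ((M:ℝ≥0∞)) = ENNReal.ofReal (M:ℝ) by simp]
  exact ENNReal.ofReal_le_ofReal (le_max_left _ _)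


lemma rpow_lt_ofReal_iff {z : ℝ≥0∞} {t k : ℝ} (ht : 0 < t) (hk : 0 < k) :
    z ^ (1 / k) < ENNReal.ofReal t ↔ z < ENNReal.ofReal (t ^ k) := by
  rw [← ENNReal.ofReal_rpow_of_pos ht, ← ENNReal.rpow_lt_rpow_iff hk (x := z ^ (1/k)),
    ← ENNReal.rpow_mul, one_div, inv_mul_cancel₀ hk.ne', ENNReal.rpow_one]

lemma ofReal_quarter : (ENNReal.ofReal (1/4) = 1/4) := by
  rw [ENNReal.ofReal_div_of_pos (by norm_num)]; norm_num



lemma quantErr_le_codebook {X Y : Type*} [MeasurableSpace X] [MeasurableSpace Y]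
    (μX : Measure X) (ρ : X → Y → ℝ≥0∞) (hρ : Measurable (Function.uncurry ρ))
    {n : ℕ} (hn : 0 < n) (y : Fin n → Y) :
    quantErr μX ρ n ≤ ∫⁻ x, ⨅ i, ρ x (y i) ∂μX := by
  haveI : Nonempty (Fin n) := ⟨⟨0, hn⟩⟩
  set P : X → Fin n → Prop := fun x i => ρ x (y i) = ⨅ j, ρ x (y j) with hP_def
  have hex : ∀ x, ∃ i : Fin n, P x i := by
    intro x
    obtain ⟨i, hi⟩ := Finite.exists_min (fun i : Fin n => ρ x (y i))
    exact ⟨i, le_antisymm (le_iInf hi) (iInf_le _ i)⟩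
  have hsome : ∀ x, ∃ k, P x k := hex
  set g : X → Fin n := fun x => Fin.find (P x) (hsome x) with hg_def
  have hgP : ∀ x, P x (g x) := by
    intro x
    exact Fin.find_spec (hsome x)
  have hmeasρ : ∀ i : Fin n, Measurable fun x => ρ x (y i) := fun i =>
    hρ.comp (measurable_id.prodMk measurable_const)
  have hmeasInf : Measurable fun x => ⨅ j, ρ x (y j) := Measurable.iInf hmeasρ
  have hPmeas : ∀ i, MeasurableSet {x | P x i} := by
    intro i
    have : {x | P x i} = {x | ρ x (y i) ≤ ⨅ j, ρ x (y j)} ∩ {x | ⨅ j, ρ x (y j) ≤ ρ x (y i)} := by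
      ext x; simp only [Set.mem_setOf_eq, Set.mem_inter_iff, hP_def]; exact le_antisymm_iff
    rw [this]
    exact (measurableSet_le (hmeasρ i) hmeasInf).inter (measurableSet_le hmeasInf (hmeasρ i))
  have hg : Measurable g := by
    apply measurable_to_countable'
    intro i
    have : g ⁻¹' {i} = {x | P x i} ∩ ⋂ j : Fin n, {x | P x j → i ≤ j} := by
      ext x
      simp only [Set.mem_preimage, Set.mem_singleton_iff, Set.mem_inter_iff,
        Set.mem_iInter, Set.mem_setOf_eq]
      constructor
      · rintro rfl
        exact ⟨Fin.find_spec (hsome x), fun j hj => not_lt.1 (fun hlt => Fin.find_min (hsome x) hlt hj)⟩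
      · rintro ⟨h1, h2⟩
        exact (Fin.find_eq_iff (hsome x)).2 ⟨h1, fun j hj hpj => absurd (h2 j hpj) (not_le.2 hj)⟩
    rw [this]
    refine (hPmeas i).inter (MeasurableSet.iInter fun j => ?_)
    by_cases hij : i ≤ j
    · have : {x | P x j → i ≤ j} = Set.univ := by
        ext x; simp [hij]
      rw [this]; exact MeasurableSet.univ
    · have : {x | P x j → i ≤ j} = {x | P x j}ᶜ := by
        ext x; simp [hij]
      rw [this]; exact (hPmeas j).compl
  set f : X → Y := fun x => y (g x) with hf_def
  have hfm : Measurable f := measurable_from_top.comp hg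
  refine le_trans (iInf_le _ f) (le_trans (iInf_le _ ?_) (le_of_eq (lintegral_congr fun x => hgP x)))
  exact ⟨hfm, Finset.image y Finset.univ, le_trans (Finset.card_image_le) (by simp),
    fun x => Finset.mem_image_of_mem y (Finset.mem_univ _)⟩

lemma lower_bound {X Y : Type*} [MeasurableSpace X] [MeasurableSpace Y]
    (μ : Measure X) [SigmaFinite μ] (μX : Measure X) [IsProbabilityMeasure μX]
    (hac : μX ≪ μ)
    (ρ : X → Y → ℝ≥0∞) (hρ : Measurable (Function.uncurry ρ))
    (k m c : ℝ) (δ₀ : ℝ≥0∞) (hk : 0 < k) (hm : 0 < m) (hc : 0 < c) (hδ₀ : 0 < δ₀)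
    (hsub : ∀ y : Y, ∀ t : ℝ, 0 < t → ENNReal.ofReal t < δ₀ →
      μ {x | (ρ x y) ^ (1 / k) < ENNReal.ofReal t} ≤ ENNReal.ofReal (c * t ^ m)) :
    ∃ C : ℝ, 0 < C ∧ ∀ᶠ n : ℕ in atTop,
      ENNReal.ofReal (C * (n:ℝ) ^ (-(k/m))) ≤ quantErr μX ρ n := by
  -- truncation level M
  obtain ⟨M, hM1, hMmeas⟩ := exists_trunc_level μ μX hac
  have hM0 : (0:ℝ) < M := lt_of_lt_of_le one_pos hM1
  set a : ℝ := 4 * M * c with ha_def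
  have ha : 0 < a := by positivity
  set t : ℕ → ℝ := fun n => (a * n) ^ (-(1/m)) with ht_def
  refine ⟨(1/4) * a ^ (-(k/m)), by positivity, ?_⟩
  have htend : Tendsto (fun n : ℕ => ENNReal.ofReal (t n)) atTop (𝓝 0) := by
    rw [show (0:ℝ≥0∞) = ENNReal.ofReal 0 by simp]
    apply ENNReal.tendsto_ofReal
    exact (tendsto_rpow_neg_atTop (by positivity)).comp
      (tendsto_natCast_atTop_atTop.const_mul_atTop ha)
  filter_upwards [htend.eventually_lt_const hδ₀, eventually_ge_atTop 1] with n hδ hn1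
  have hnR : (0:ℝ) < n := by exact_mod_cast hn1
  have han : (0:ℝ) < a * n := by positivity
  have htpos : 0 < t n := Real.rpow_pos_of_pos han _
  have htm : t n ^ m = (a * n)⁻¹ := by
    rw [ht_def, ← Real.rpow_mul han.le]
    rw [show -(1/m) * m = -1 by rw [neg_mul, one_div, inv_mul_cancel₀ hm.ne'], Real.rpow_neg_one]
  have htk : t n ^ k = (a*n) ^ (-(k/m)) := by
    rw [ht_def, ← Real.rpow_mul han.le]
    congr 1; field_simp
  refine le_iInf fun f => le_iInf fun hf => ?_
  obtain ⟨hfm, s, hcard, hmem⟩ := hf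
  set T : ℝ≥0∞ := ENNReal.ofReal (t n ^ k) with hT_def
  set A : Set X := {x | μX.rnDeriv μ x ≤ ENNReal.ofReal M} with hA_def
  set E : Set X := {x | ρ x (f x) < T} with hE_def
  have hfx : Measurable fun x => ρ x (f x) := hρ.comp (measurable_id.prodMk hfm)
  have hA : MeasurableSet A := measurableSet_le (μX.measurable_rnDeriv μ) measurable_const
  have hEy : ∀ y : Y, MeasurableSet {x | ρ x y < T} := fun y =>
    measurableSet_lt (hρ.comp (measurable_id.prodMk measurable_const)) measurable_const
  -- Step 1
  have step1 : μX (A ∩ E) ≤ ENNReal.ofReal (1/4) := by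
    calc μX (A ∩ E) ≤ μX (⋃ y ∈ s, A ∩ {x | ρ x y < T}) := by
          refine measure_mono fun x hx => Set.mem_biUnion (hmem x) ⟨hx.1, hx.2⟩
      _ ≤ ∑ y ∈ s, μX (A ∩ {x | ρ x y < T}) := measure_biUnion_finset_le s _
      _ ≤ ∑ y ∈ s, ENNReal.ofReal (M * (c * t n ^ m)) := by
          refine Finset.sum_le_sum fun y _ => ?_
          have h1 : μX (A ∩ {x | ρ x y < T}) = ∫⁻ x in A ∩ {x | ρ x y < T}, μX.rnDeriv μ x ∂μ := by
            conv_lhs => rw [← Measure.withDensity_rnDeriv_eq μX μ hac]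
            exact withDensity_apply _ (hA.inter (hEy y))
          rw [h1]
          calc ∫⁻ x in A ∩ {x | ρ x y < T}, μX.rnDeriv μ x ∂μ
              ≤ ∫⁻ _ in A ∩ {x | ρ x y < T}, ENNReal.ofReal M ∂μ :=
                setLIntegral_mono measurable_const fun x hx => hx.1
            _ = ENNReal.ofReal M * μ (A ∩ {x | ρ x y < T}) := setLIntegral_const _ _
            _ ≤ ENNReal.ofReal M * ENNReal.ofReal (c * t n ^ m) := by
                refine mul_le_mul_right ?_ _
                refine le_trans (measure_mono Set.inter_subset_right) ?_
                have : {x | ρ x y < T} = {x | (ρ x y) ^ (1/k) < ENNReal.ofReal (t n)} := by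
                  ext x; simp only [Set.mem_setOf_eq, hT_def]
                  exact (rpow_lt_ofReal_iff htpos hk).symm
                rw [this]; exact hsub y (t n) htpos hδ
            _ = ENNReal.ofReal (M * (c * t n ^ m)) := (ENNReal.ofReal_mul hM0.le).symm
      _ = (s.card : ℝ≥0∞) * ENNReal.ofReal (M * (c * t n ^ m)) := by
          rw [Finset.sum_const, nsmul_eq_mul]
      _ ≤ (n : ℝ≥0∞) * ENNReal.ofReal (M * (c * t n ^ m)) := by
          exact mul_le_mul_left (by exact_mod_cast hcard) _
      _ = ENNReal.ofReal ((n:ℝ) * (M * (c * t n ^ m))) := by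
          rw [ENNReal.ofReal_mul (Nat.cast_nonneg n), ENNReal.ofReal_natCast]
      _ = ENNReal.ofReal (1/4) := by
          congr 1
          rw [htm, ha_def]
          field_simp
  -- Step 2
  have step2 : ENNReal.ofReal (1/4) ≤ μX (A \ E) := by
    have hsplit : μX A ≤ μX (A \ E) + μX (A ∩ E) := by
      refine le_trans (measure_mono fun x hx => ?_) (measure_union_le _ _)
      by_cases hxE : x ∈ E
      · exact Or.inr ⟨hx, hxE⟩
      · exact Or.inl ⟨hx, hxE⟩
    have h12 : (1:ℝ≥0∞)/2 ≤ μX (A \ E) + 1/4 := by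
      refine le_trans hMmeas (le_trans hsplit ?_)
      exact add_le_add_right (step1.trans_eq ofReal_quarter) _
    rw [ofReal_quarter]
    have h5 := tsub_le_iff_right.2 h12
    have h4 : (1:ℝ≥0∞)/2 - 1/4 = 1/4 := by
      rw [show (1:ℝ≥0∞)/2 = ENNReal.ofReal (1/2) by rw [ENNReal.ofReal_div_of_pos] <;> norm_num,
        show (1:ℝ≥0∞)/4 = ENNReal.ofReal (1/4) by rw [ENNReal.ofReal_div_of_pos] <;> norm_num,
        ← ENNReal.ofReal_sub _ (by norm_num)]
      norm_num
    exact h4 ▸ h5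
  -- Step 3
  calc ENNReal.ofReal ((1/4) * a ^ (-(k/m)) * (n:ℝ) ^ (-(k/m)))
      = T * ENNReal.ofReal (1/4) := by
        rw [hT_def, ← ENNReal.ofReal_mul (by positivity)]
        congr 1
        rw [htk, Real.mul_rpow ha.le (Nat.cast_nonneg n)]
        ring
    _ ≤ T * μX (A \ E) := mul_le_mul_right step2 _
    _ = ∫⁻ _ in A \ E, T ∂μX := (setLIntegral_const _ _).symm
    _ ≤ ∫⁻ x in A \ E, ρ x (f x) ∂μX :=
        setLIntegral_mono hfx fun x hx => not_lt.1 hx.2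
    _ ≤ ∫⁻ x, ρ x (f x) ∂μX := setLIntegral_le_lintegral _ _

lemma upper_bound {X Y : Type*} [MeasurableSpace X] [MeasurableSpace Y]
    (μX : Measure X) [IsProbabilityMeasure μX]
    (ν : Measure Y) [IsFiniteMeasure ν]
    (ρ : X → Y → ℝ≥0∞) (hρ : Measurable (Function.uncurry ρ))
    (k m b : ℝ) (δ₀ : ℝ≥0∞) (hk : 0 < k) (hm : 0 < m) (hb : 0 < b) (hδ₀ : 0 < δ₀)
    (hν0 : 0 < ν Set.univ)
    (hsup : ∀ x : X, ∀ t : ℝ, 0 < t → ENNReal.ofReal t < δ₀ →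
      ENNReal.ofReal (b * t ^ m) ≤ ν {y | (ρ x y) ^ (1 / k) < ENNReal.ofReal t})
    (hB : (⨆ x : X, ⨆ y : Y, (ρ x y) ^ (1 / k)) < ∞) :
    ∃ D : ℝ, 0 < D ∧ ∀ᶠ n : ℕ in atTop,
      quantErr μX ρ n ≤ ENNReal.ofReal (D * (Real.log n / n) ^ (k/m)) := by
  classical
  set V : ℝ := (ν Set.univ).toReal with hV_def
  have hV : 0 < V := ENNReal.toReal_pos hν0.ne' (measure_ne_top ν _)
  set β : ℝ≥0∞ := ⨆ x : X, ⨆ y : Y, (ρ x y) ^ (1 / k) with hβ_def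
  set B : ℝ≥0∞ := β ^ k with hB_def
  have hBfin : B ≠ ∞ := by
    rw [hB_def]
    exact ENNReal.rpow_ne_top_of_nonneg hk.le hB.ne
  set Br : ℝ := B.toReal with hBr_def
  have hBr : B = ENNReal.ofReal Br := by rw [hBr_def, ENNReal.ofReal_toReal hBfin]
  have hρle : ∀ (x : X) (z : Y), ρ x z ≤ B := by
    intro x z
    have h1 : (ρ x z) ^ (1/k) ≤ β :=
      le_trans (le_iSup (fun z => (ρ x z) ^ (1/k)) z) (le_iSup (fun x => ⨆ z, (ρ x z) ^ (1/k)) x)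
    calc ρ x z = ((ρ x z) ^ (1/k)) ^ k := by
          rw [← ENNReal.rpow_mul, one_div, inv_mul_cancel₀ hk.ne', ENNReal.rpow_one]
      _ ≤ β ^ k := ENNReal.rpow_le_rpow h1 hk.le
  set L : ℝ := k/m + 1 with hL_def
  have hL : 0 < L := by positivity
  set w : ℕ → ℝ := fun n => L * Real.log n / n with hw_def
  set t : ℕ → ℝ := fun n => (V * w n / b) ^ (1/m) with ht_def
  set ν' : Measure Y := (ν Set.univ)⁻¹ • ν with hν'_def
  haveI hν'prob : IsProbabilityMeasure ν' := by
    constructor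
    rw [hν'_def, Measure.smul_apply, smul_eq_mul,
      ENNReal.inv_mul_cancel hν0.ne' (measure_ne_top ν _)]
  refine ⟨2 * (V * L / b) ^ (k/m), by positivity, ?_⟩
  -- eventual conditions
  have hwtend : Tendsto w atTop (𝓝 0) := by
    have h1 : Tendsto (fun x : ℝ => Real.log x / x) atTop (𝓝 0) :=
      Real.isLittleO_log_id_atTop.tendsto_div_nhds_zero
    have h2 : Tendsto (fun n : ℕ => Real.log n / n) atTop (𝓝 0) :=
      h1.comp tendsto_natCast_atTop_atTop
    have h3 := Filter.Tendsto.const_mul L h2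
    rw [mul_zero] at h3
    simpa only [hw_def, mul_div_assoc] using h3
  have httend : Tendsto (fun n => ENNReal.ofReal (t n)) atTop (𝓝 0) := by
    rw [show (0:ℝ≥0∞) = ENNReal.ofReal 0 by simp]
    apply ENNReal.tendsto_ofReal
    have h1 : Tendsto (fun n : ℕ => V * w n / b) atTop (𝓝 0) := by
      have h0 := (Filter.Tendsto.const_mul V hwtend).div_const b
      simpa using h0
    have h2 : ContinuousAt (fun x : ℝ => x ^ (1/m)) 0 := by
      apply Real.continuousAt_rpow_const
      right; positivity
    have h3 := h2.tendsto.comp h1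
    rw [Real.zero_rpow ((by positivity : (0:ℝ) < 1/m)).ne'] at h3
    exact h3
  have hbig : Tendsto (fun n : ℕ => (V*L/b)^(k/m) * ((Real.log n) ^ (k/m) * n)) atTop atTop := by
    apply Tendsto.const_mul_atTop (by positivity)
    exact ((tendsto_rpow_atTop (by positivity)).comp
      (Real.tendsto_log_atTop.comp tendsto_natCast_atTop_atTop)).atTop_mul_atTop₀
      tendsto_natCast_atTop_atTop
  filter_upwards [httend.eventually_lt_const hδ₀, hwtend.eventually_lt_const (by norm_num : (0:ℝ) < 1),
    eventually_ge_atTop 2, hbig.eventually_ge_atTop Br] with n hδ hw1 hn2 hnbig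
  have hn0 : 0 < n := by omega
  have hnR : (0:ℝ) < n := by exact_mod_cast hn0
  have hlogn : 0 < Real.log n := Real.log_pos (by exact_mod_cast hn2)
  have hwpos : 0 < w n := by rw [hw_def]; positivity
  have htpos : 0 < t n := Real.rpow_pos_of_pos (by positivity) _
  have htm : t n ^ m = V * w n / b := by
    rw [ht_def, ← Real.rpow_mul (by positivity), one_div, inv_mul_cancel₀ hm.ne', Real.rpow_one]
  have hbtm : b * t n ^ m / V = w n := by rw [htm]; field_simp
  haveI : Nonempty (Fin n) := ⟨⟨0, hn0⟩⟩
  set T : ℝ≥0∞ := ENNReal.ofReal (t n ^ k) with hT_def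
  set Pn : Measure (Fin n → Y) := Measure.pi (fun _ => ν') with hPn_def
  haveI : IsProbabilityMeasure Pn := by rw [hPn_def]; infer_instance
  -- measurability of F
  have hF : Measurable (Function.uncurry fun (x : X) (y : Fin n → Y) => ⨅ i, ρ x (y i)) := by
    apply Measurable.iInf
    intro i
    exact hρ.comp (measurable_fst.prodMk ((measurable_pi_apply i).comp measurable_snd))
  -- step A : quantErr ≤ double integral
  have stepA : quantErr μX ρ n ≤ ∫⁻ x, ∫⁻ y, (⨅ i, ρ x (y i)) ∂Pn ∂μX := by
    rw [lintegral_lintegral_swap hF.aemeasurable]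
    have h1 : ∀ y : Fin n → Y, quantErr μX ρ n ≤ ∫⁻ x, ⨅ i, ρ x (y i) ∂μX :=
      fun y => quantErr_le_codebook μX ρ hρ hn0 y
    calc quantErr μX ρ n = ∫⁻ _, quantErr μX ρ n ∂Pn := by
          rw [lintegral_const, measure_univ, mul_one]
      _ ≤ _ := lintegral_mono h1
  -- step B : inner integral bound
  have stepB : ∀ x : X, (∫⁻ y, (⨅ i, ρ x (y i)) ∂Pn) ≤ T + B * ENNReal.ofReal ((1 - w n)^n) := by
    intro x
    set A : Set Y := {z | T ≤ ρ x z} with hA_def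
    have hρx : Measurable (ρ x) := hρ.comp (measurable_const.prodMk measurable_id)
    have hAmeas : MeasurableSet A := measurableSet_le measurable_const hρx
    set E : Set (Fin n → Y) := Set.univ.pi (fun _ => A) with hE_def
    have hEmeas : MeasurableSet E := MeasurableSet.univ_pi (fun _ => hAmeas)
    have hpoint : ∀ y : Fin n → Y, (⨅ i, ρ x (y i)) ≤ T + E.indicator (fun _ => B) y := by
      intro y
      by_cases hy : y ∈ E
      · rw [Set.indicator_of_mem hy]
        refine le_trans (iInf_le _ (Classical.arbitrary (Fin n))) (le_trans (hρle _ _) le_add_self)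
      · rw [Set.indicator_of_notMem hy, add_zero]
        obtain ⟨i, hi⟩ := not_forall.1 (fun h => hy (Set.mem_univ_pi.2 h))
        exact le_trans (iInf_le _ i) (not_le.1 hi).le
    calc (∫⁻ y, (⨅ i, ρ x (y i)) ∂Pn) ≤ ∫⁻ y, (T + E.indicator (fun _ => B) y) ∂Pn :=
          lintegral_mono hpoint
      _ = T + B * Pn E := by
          rw [lintegral_add_left measurable_const, lintegral_const, measure_univ, mul_one,
            lintegral_indicator_const hEmeas]
      _ ≤ T + B * ENNReal.ofReal ((1 - w n)^n) := by
          refine add_le_add_right (mul_le_mul_right ?_ B) T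
          have hπE : Pn E = (ν' A)^n := by
            rw [hPn_def, hE_def, Measure.pi_pi, Finset.prod_const, Finset.card_univ, Fintype.card_fin]
          rw [hπE]
          have hcompl : ν' A = 1 - ν' Aᶜ := by
            rw [← prob_compl_eq_one_sub hAmeas.compl, compl_compl]
          have hAc : Aᶜ = {z | (ρ x z) ^ (1/k) < ENNReal.ofReal (t n)} := by
            ext z
            simp only [hA_def, Set.mem_compl_iff, Set.mem_setOf_eq, not_le, hT_def]
            exact (rpow_lt_ofReal_iff htpos hk).symm
          have hνAc : ENNReal.ofReal (w n) ≤ ν' Aᶜ := by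
            rw [hAc, hν'_def, Measure.smul_apply, smul_eq_mul]
            have h1 := hsup x (t n) htpos hδ
            have h2 : ν Set.univ = ENNReal.ofReal V := by
              rw [hV_def, ENNReal.ofReal_toReal (measure_ne_top ν _)]
            calc ENNReal.ofReal (w n) = ENNReal.ofReal (b * t n ^ m / V) := by rw [hbtm]
              _ = ENNReal.ofReal (b * t n ^ m) / ENNReal.ofReal V := ENNReal.ofReal_div_of_pos hV
              _ = (ν Set.univ)⁻¹ * ENNReal.ofReal (b * t n ^ m) := by
                  rw [h2, div_eq_mul_inv, mul_comm]
              _ ≤ (ν Set.univ)⁻¹ * ν {z | (ρ x z) ^ (1/k) < ENNReal.ofReal (t n)} :=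
                  mul_le_mul_right h1 _
          have : ν' A ≤ ENNReal.ofReal (1 - w n) := by
            rw [hcompl, show ENNReal.ofReal (1 - w n) = 1 - ENNReal.ofReal (w n) by
              rw [ENNReal.ofReal_sub _ hwpos.le, ENNReal.ofReal_one]]
            exact tsub_le_tsub_left hνAc 1
          calc (ν' A)^n ≤ (ENNReal.ofReal (1 - w n))^n := pow_le_pow_left' this n
            _ = ENNReal.ofReal ((1 - w n)^n) := (ENNReal.ofReal_pow (by linarith) n).symm
  -- combine
  have stepC : quantErr μX ρ n ≤ T + B * ENNReal.ofReal ((1 - w n)^n) := by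
    refine le_trans stepA ?_
    calc ∫⁻ x, ∫⁻ y, (⨅ i, ρ x (y i)) ∂Pn ∂μX
        ≤ ∫⁻ _, (T + B * ENNReal.ofReal ((1 - w n)^n)) ∂μX := lintegral_mono stepB
      _ = T + B * ENNReal.ofReal ((1 - w n)^n) := by
          rw [lintegral_const, measure_univ, mul_one]
  -- exp bound
  have hexp : ((1 - w n)^n : ℝ) ≤ (n:ℝ) ^ (-L) := by
    have h1 : (1 - w n) ≤ Real.exp (-(w n)) := by
      have := Real.add_one_le_exp (-(w n)); linarith
    have h2 : ((1 - w n)^n : ℝ) ≤ Real.exp (-(w n))^n :=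
      pow_le_pow_left₀ (by linarith) h1 n
    have h3 : Real.exp (-(w n))^n = Real.exp (-(L * Real.log n)) := by
      rw [← Real.exp_nat_mul]; congr 1; rw [hw_def]; field_simp
    have h4 : (n:ℝ) ^ (-L) = Real.exp (-(L * Real.log n)) := by
      rw [Real.rpow_def_of_pos hnR]; congr 1; ring
    rw [h4]; rw [h3] at h2; exact h2
  -- final
  have htk : t n ^ k = (V*L/b) ^ (k/m) * (Real.log n / n) ^ (k/m) := by
    rw [ht_def, ← Real.rpow_mul (by positivity), one_div, inv_mul_eq_div,
      ← Real.mul_rpow (by positivity) (by positivity)]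
    congr 1
    rw [hw_def]
    field_simp
  have hfin : T + B * ENNReal.ofReal ((1 - w n)^n)
      ≤ ENNReal.ofReal (2 * (V * L / b) ^ (k/m) * (Real.log n / n) ^ (k/m)) := by
    rw [hBr, ← ENNReal.ofReal_mul ENNReal.toReal_nonneg, hT_def,
      ← ENNReal.ofReal_add (by positivity) (mul_nonneg ENNReal.toReal_nonneg (pow_nonneg (by linarith) n))]
    apply ENNReal.ofReal_le_ofReal
    have hBr0 : 0 ≤ Br := ENNReal.toReal_nonneg
    have h1 : Br * (1 - w n)^n ≤ Br * (n:ℝ)^(-L) :=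
      mul_le_mul_of_nonneg_left hexp hBr0
    have h2 : Br * (n:ℝ)^(-L) ≤ (V*L/b)^(k/m) * (Real.log n)^(k/m) * n * (n:ℝ)^(-L) := by
      refine mul_le_mul_of_nonneg_right ?_ (by positivity)
      calc Br ≤ (V*L/b)^(k/m) * ((Real.log n)^(k/m) * n) := hnbig
        _ = (V*L/b)^(k/m) * (Real.log n)^(k/m) * n := by ring
    have h3 : (V*L/b)^(k/m) * (Real.log n)^(k/m) * n * (n:ℝ)^(-L)
        = (V*L/b)^(k/m) * (Real.log n / n)^(k/m) := by
      rw [Real.div_rpow hlogn.le hnR.le, hL_def]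
      rw [Real.rpow_neg hnR.le, Real.rpow_add hnR, Real.rpow_one]
      field_simp
    have h4 : t n ^ k + Br * (1 - w n)^n
        ≤ (V*L/b)^(k/m) * (Real.log n / n)^(k/m) + (V*L/b)^(k/m) * (Real.log n / n)^(k/m) := by
      refine add_le_add (le_of_eq htk) ?_
      exact h1.trans (h2.trans_eq h3)
    linarith [h4]
  exact stepC.trans hfin


/-- Suppose `μ_X ≪ μ` with `‖dμ_X/dμ‖_∞^{(μ)} < ∞` or finite
generalized entropy, `μ` is `ρ^{1/k}`-subregular of dimension `m` with constants `c, δ₀`,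
`ν` is a finite measure that is `ρ^{1/k}`-superregular of dimension `m` with constants
`b, δ₀`, `sup_{x,y} ρ(x,y)^{1/k} < ∞` if `δ₀ < ∞`, and `μ(X) = 1` if both `δ₀ < ∞` and
`‖dμ_X/dμ‖_∞^{(μ)} = ∞`.  Then the `k`-th quantization dimension exists and equals `m`. -/
theorem quantization_dimension_exists_eq
    {X Y : Type*} [MeasurableSpace X] [MeasurableSpace Y]
    (μ : Measure X) [SigmaFinite μ] (μX : Measure X) [IsProbabilityMeasure μX]
    (hac : μX ≪ μ)
    (hor : essSup (μX.rnDeriv μ) μ < ∞ ∨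
      Integrable (fun x => Real.log ((μX.rnDeriv μ x).toReal)) μX)
    (ν : Measure Y) [IsFiniteMeasure ν]
    (ρ : X → Y → ℝ≥0∞) (hρ : Measurable (Function.uncurry ρ))
    (k m c b : ℝ) (δ₀ : ℝ≥0∞)
    (hk : 0 < k) (hm : 0 < m) (hc : 0 < c) (hb : 0 < b) (hδ₀ : 0 < δ₀)
    (hsub : ∀ y : Y, ∀ t : ℝ, 0 < t → ENNReal.ofReal t < δ₀ →
      μ {x | (ρ x y) ^ (1 / k) < ENNReal.ofReal t} ≤ ENNReal.ofReal (c * t ^ m))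
    (hsup : ∀ x : X, ∀ t : ℝ, 0 < t → ENNReal.ofReal t < δ₀ →
      ENNReal.ofReal (b * t ^ m) ≤ ν {y | (ρ x y) ^ (1 / k) < ENNReal.ofReal t})
    (hβ : δ₀ < ∞ → (⨆ x : X, ⨆ y : Y, (ρ x y) ^ (1 / k)) < ∞)
    (hμ1 : δ₀ < ∞ ∧ essSup (μX.rnDeriv μ) μ = ∞ → μ Set.univ = 1) :
    Filter.liminf (fun n : ℕ => ((qRatio μX ρ k n : ℝ) : EReal)) atTop = ((m : ℝ) : EReal) ∧
    Filter.limsup (fun n : ℕ => ((qRatio μX ρ k n : ℝ) : EReal)) atTop = ((m : ℝ) : EReal) := by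
  classical
  -- X is nonempty
  have hXne : Nonempty X := by
    by_contra h
    rw [not_nonempty_iff] at h
    have h0 : μX Set.univ = 0 := by
      rw [Set.univ_eq_empty_iff.2 h]; exact measure_empty
    rw [measure_univ] at h0; exact one_ne_zero h0
  obtain ⟨x₀⟩ := hXne
  -- δ₀ is finite
  have hδfin : δ₀ < ∞ := by
    by_contra hδtop
    rw [not_lt, top_le_iff] at hδtop
    set V : ℝ := (ν Set.univ).toReal with hV_def
    have hV : 0 ≤ V := ENNReal.toReal_nonneg
    set t : ℝ := ((V + 1)/b) ^ (1/m) with ht_def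
    have htpos : 0 < t := Real.rpow_pos_of_pos (by positivity) _
    have htm : b * t ^ m = V + 1 := by
      rw [ht_def, ← Real.rpow_mul (by positivity), one_div, inv_mul_cancel₀ hm.ne',
        Real.rpow_one]
      field_simp
    have h1 := hsup x₀ t htpos (by rw [hδtop]; exact ENNReal.ofReal_lt_top)
    have h2 : ENNReal.ofReal (V + 1) ≤ ν Set.univ :=
      (htm ▸ h1).trans (measure_mono (Set.subset_univ _))
    have h3 : ENNReal.ofReal (V + 1) ≤ ENNReal.ofReal V := by
      rw [show ENNReal.ofReal V = ν Set.univ by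
        rw [hV_def, ENNReal.ofReal_toReal (measure_ne_top ν _)]]
      exact h2
    have := (ENNReal.ofReal_le_ofReal_iff hV).1 h3
    linarith
  -- ν is nonzero
  have hν0 : 0 < ν Set.univ := by
    have hδr : 0 < δ₀.toReal := ENNReal.toReal_pos hδ₀.ne' hδfin.ne
    have h1 := hsup x₀ (δ₀.toReal/2) (by positivity) (by
      calc ENNReal.ofReal (δ₀.toReal/2) < ENNReal.ofReal δ₀.toReal := by
            rw [ENNReal.ofReal_lt_ofReal_iff hδr]; linarith
        _ = δ₀ := ENNReal.ofReal_toReal hδfin.ne)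
    calc (0:ℝ≥0∞) < ENNReal.ofReal (b * (δ₀.toReal/2) ^ m) := by
          rw [ENNReal.ofReal_pos]; positivity
      _ ≤ ν {y | (ρ x₀ y) ^ (1/k) < ENNReal.ofReal (δ₀.toReal/2)} := h1
      _ ≤ ν Set.univ := measure_mono (Set.subset_univ _)
  -- bounds
  obtain ⟨C, hC, hlow⟩ := lower_bound μ μX hac ρ hρ k m c δ₀ hk hm hc hδ₀ hsub
  obtain ⟨D, hD, hup⟩ := upper_bound μX ν ρ hρ k m b δ₀ hk hm hb hδ₀ hν0 hsup (hβ hδfin)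
  set p : ℝ := k/m with hp_def
  have hp : 0 < p := by positivity
  set r : ℕ → ℝ := fun n => (quantErr μX ρ n).toReal with hr_def
  set u : ℕ → ℝ := fun n => -Real.log (r n) with hu_def
  have hqr : ∀ n : ℕ, qRatio μX ρ k n = k / (u n / Real.log n) := by
    intro n
    rw [qRatio, div_div_eq_mul_div, hu_def]
    simp only
    rw [one_div, Real.log_inv, hr_def]
  have hlogtop : Tendsto (fun n : ℕ => Real.log n) atTop atTop :=
    Real.tendsto_log_atTop.comp tendsto_natCast_atTop_atTop
  have hloglog : Tendsto (fun n : ℕ => Real.log (Real.log n) / Real.log n) atTop (𝓝 0) :=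
    Real.isLittleO_log_id_atTop.tendsto_div_nhds_zero.comp hlogtop
  have hinvlog : ∀ a : ℝ, Tendsto (fun n : ℕ => a / Real.log n) atTop (𝓝 0) :=
    fun a => tendsto_const_nhds.div_atTop hlogtop
  have hlo : Tendsto (fun n : ℕ => p - (Real.log D + p * Real.log (Real.log n)) / Real.log n)
      atTop (𝓝 p) := by
    have h1 : Tendsto (fun n : ℕ => (Real.log D + p * Real.log (Real.log n)) / Real.log n)
        atTop (𝓝 0) := by
      have h2 := (hinvlog (Real.log D)).add (hloglog.const_mul p)
      rw [mul_zero, add_zero] at h2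
      refine h2.congr fun n => ?_
      rw [add_div, mul_div_assoc]
    have h3 := (tendsto_const_nhds : Tendsto (fun _ : ℕ => p) atTop (𝓝 p)).sub h1
    simpa using h3
  have hhi : Tendsto (fun n : ℕ => p + (-(Real.log C)) / Real.log n) atTop (𝓝 p) := by
    have h3 := (tendsto_const_nhds : Tendsto (fun _ : ℕ => p) atTop (𝓝 p)).add
      (hinvlog (-(Real.log C)))
    simpa using h3
  have hkey : ∀ᶠ n : ℕ in atTop,
      (p - (Real.log D + p * Real.log (Real.log n)) / Real.log n ≤ u n / Real.log n) ∧
      (u n / Real.log n ≤ p + (-(Real.log C)) / Real.log n) := by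
    filter_upwards [hup, hlow, eventually_ge_atTop 3] with n h2 h1 hn3
    have hnR : (0:ℝ) < n := by positivity
    have hlogn0 : (0:ℝ) < Real.log n :=
      Real.log_pos (by exact_mod_cast (by omega : 2 ≤ n))
    have hfin : quantErr μX ρ n ≠ ∞ := (lt_of_le_of_lt h2 ENNReal.ofReal_lt_top).ne
    have hrge : C * (n:ℝ) ^ (-p) ≤ r n := (ENNReal.ofReal_le_iff_le_toReal hfin).1 h1
    have hr0 : 0 < r n := lt_of_lt_of_le (by positivity) hrge
    have hz : (0:ℝ) < Real.log n / n := by positivity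
    have hrle : r n ≤ D * (Real.log n / n) ^ p :=
      ENNReal.toReal_le_of_le_ofReal (by positivity) h2
    have hlogr_le : Real.log (r n)
        ≤ Real.log D + p * (Real.log (Real.log n) - Real.log n) := by
      calc Real.log (r n) ≤ Real.log (D * (Real.log n / n) ^ p) := Real.log_le_log hr0 hrle
        _ = Real.log D + p * Real.log (Real.log n / n) := by
            rw [Real.log_mul hD.ne' (by positivity), Real.log_rpow hz]
        _ = Real.log D + p * (Real.log (Real.log n) - Real.log n) := by
            rw [Real.log_div hlogn0.ne' hnR.ne']
    have hlogr_ge : Real.log C + (-p) * Real.log n ≤ Real.log (r n) := by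
      calc Real.log C + (-p) * Real.log n = Real.log (C * (n:ℝ) ^ (-p)) := by
            rw [Real.log_mul hC.ne' (by positivity), Real.log_rpow hnR]
        _ ≤ Real.log (r n) := Real.log_le_log (by positivity) hrge
    have huval : u n = -Real.log (r n) := rfl
    constructor
    · have e1 : p - (Real.log D + p * Real.log (Real.log n)) / Real.log n
          = (p * Real.log n - (Real.log D + p * Real.log (Real.log n))) / Real.log n := by
        field_simp
      rw [e1]
      have : p * Real.log n - (Real.log D + p * Real.log (Real.log n)) ≤ u n := by
        rw [huval]; nlinarith [hlogr_le]
      gcongr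
    · have e2 : p + (-(Real.log C)) / Real.log n
          = (p * Real.log n - Real.log C) / Real.log n := by
        field_simp
        ring
      rw [e2]
      have : u n ≤ p * Real.log n - Real.log C := by
        rw [huval]; nlinarith [hlogr_ge]
      gcongr
  have hulog : Tendsto (fun n : ℕ => u n / Real.log n) atTop (𝓝 p) :=
    tendsto_of_tendsto_of_tendsto_of_le_of_le' hlo hhi
      (hkey.mono fun n h => h.1) (hkey.mono fun n h => h.2)
  have hfinal : Tendsto (fun n : ℕ => qRatio μX ρ k n) atTop (𝓝 m) := by
    have h1 : Tendsto (fun n : ℕ => k / (u n / Real.log n)) atTop (𝓝 (k / p)) :=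
      (tendsto_const_nhds : Tendsto (fun _ : ℕ => k) atTop (𝓝 k)).div hulog hp.ne'
    have h2 : k / p = m := by
      rw [hp_def, div_div_eq_mul_div, mul_comm, mul_div_assoc, div_self hk.ne', mul_one]
    rw [← h2]
    exact h1.congr fun n => (hqr n).symm
  have hE : Tendsto (fun n : ℕ => ((qRatio μX ρ k n : ℝ) : EReal)) atTop
      (𝓝 ((m : ℝ) : EReal)) := EReal.tendsto_coe.2 hfinal
  exact ⟨hE.liminf_eq, hE.limsup_eq⟩
end
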